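/- arXiv:1905.11904 — 8 statements merged into one kernel-verified Lean document; each statement's English description precedes it below -/
import Mathlib

section
/- Let h be a Legendre kernel on ℝⁿ with C := int dom h, and let f be L_f-smooth relative to h. If ∇h is Lipschitz continuous with modulus L̃ on an open convex set U ⊆ C, then ∇f is Lipschitz continuous on U with modulus L_f·L̃. -/
open Filter Topology Set Bornology
open scoped RealInnerProductSpace

noncomputable section

/-- `ℝⁿ` as a Euclidean space. -/
abbrev Rn (n : ℕ) := EuclideanSpace ℝ (Fin n)

variable {n : ℕ}

/-- Effective domain of an extended-real-valued function. -/
def edom (h : Rn n → EReal) : Set (Rn n) := {x | h x < ⊤}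

/-- Properness: finite somewhere, never `⊥`. -/
def ERealProper (h : Rn n → EReal) : Prop := (∃ x, h x < ⊤) ∧ ∀ x, h x ≠ ⊥

/-- Convexity on a set for extended-real-valued functions. -/
def ERealConvexOn (s : Set (Rn n)) (h : Rn n → EReal) : Prop :=
  ∀ ⦃x⦄, x ∈ s → ∀ ⦃y⦄, y ∈ s → ∀ ⦃a b : ℝ⦄, 0 ≤ a → 0 ≤ b → a + b = 1 →
    h (a • x + b • y) ≤ (a : EReal) * h x + (b : EReal) * h y

/-- Strict convexity on a set for extended-real-valued functions. -/
def ERealStrictConvexOn (s : Set (Rn n)) (h : Rn n → EReal) : Prop :=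
  ∀ ⦃x⦄, x ∈ s → ∀ ⦃y⦄, y ∈ s → x ≠ y → ∀ ⦃a b : ℝ⦄, 0 < a → 0 < b → a + b = 1 →
    h (a • x + b • y) < (a : EReal) * h x + (b : EReal) * h y

/-- Strong convexity with modulus `σ` on a set, for extended-real-valued functions. -/
def ERealStrongConvexOn (s : Set (Rn n)) (σ : ℝ) (h : Rn n → EReal) : Prop :=
  ∀ ⦃x⦄, x ∈ s → ∀ ⦃y⦄, y ∈ s → ∀ ⦃a b : ℝ⦄, 0 ≤ a → 0 ≤ b → a + b = 1 →
    h (a • x + b • y) + ((σ / 2 * (a * b) * ‖x - y‖ ^ 2 : ℝ) : EReal)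
      ≤ (a : EReal) * h x + (b : EReal) * h y

/-- A Legendre kernel `h`, together with (a choice of) its gradient mapping `h'` on the
interior of its domain: proper, lsc, convex, 1-coercive, continuously differentiable and
strictly convex on the (nonempty) interior of its domain, and essentially smooth. -/
structure LegendreKernel (h : Rn n → EReal) (h' : Rn n → Rn n) : Prop where
  proper : ERealProper h
  lsc : LowerSemicontinuous h
  convex : ERealConvexOn Set.univ h
  nonemptyInterior : (interior (edom h)).Nonempty
  coercive : ∀ M : ℝ, ∃ R : ℝ, ∀ x : Rn n, R ≤ ‖x‖ → ((M * ‖x‖ : ℝ) : EReal) ≤ h x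
  differentiable : ∀ x ∈ interior (edom h), HasGradientAt (fun y => (h y).toReal) (h' x) x
  gradContinuous : ContinuousOn h' (interior (edom h))
  strictConvexOn : ERealStrictConvexOn (interior (edom h)) h
  essentiallySmooth : ∀ x ∈ frontier (edom h), ∀ u : ℕ → Rn n,
    (∀ k, u k ∈ interior (edom h)) → Tendsto u atTop (𝓝 x) →
    Tendsto (fun k => ‖h' (u k)‖) atTop atTop

open scoped Classical in
/-- Bregman distance `D_h(z, x)`, equal to `⊤` when `x ∉ int dom h`. -/
def Dbreg (h : Rn n → EReal) (h' : Rn n → Rn n) (z x : Rn n) : EReal :=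
  if x ∈ interior (edom h) then h z - h x - ((⟪h' x, z - x⟫ : ℝ) : EReal) else ⊤

/-- Objective function of the Bregman proximal subproblem. -/
def bregObj (h : Rn n → EReal) (h' : Rn n → Rn n) (φ : Rn n → EReal) (γ : ℝ)
    (x z : Rn n) : EReal :=
  φ z + ((1 / γ : ℝ) : EReal) * Dbreg h h' z x

/-- Bregman–Moreau envelope `φ^{h/γ}`. -/
def bregEnv (h : Rn n → EReal) (h' : Rn n → Rn n) (φ : Rn n → EReal) (γ : ℝ)
    (x : Rn n) : EReal :=
  ⨅ z, bregObj h h' φ γ x z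

/-- Bregman proximal mapping `prox_{γ φ}^h` (set of minimizers of the prox subproblem). -/
def bregProx (h : Rn n → EReal) (h' : Rn n → Rn n) (φ : Rn n → EReal) (γ : ℝ)
    (x : Rn n) : Set (Rn n) :=
  {z | ∀ w, bregObj h h' φ γ x z ≤ bregObj h h' φ γ x w}

/-- `γ` lies strictly below the prox-boundedness threshold `γ_φ^h`. -/
def BelowThreshold (h : Rn n → EReal) (h' : Rn n → Rn n) (φ : Rn n → EReal) (γ : ℝ) : Prop :=
  0 < γ ∧ ∃ γ' : ℝ, γ < γ' ∧ ∃ x, bregEnv h h' φ γ' x ≠ ⊥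

/-- `φ` is `h`-prox-bounded: the threshold `γ_φ^h` is positive. -/
def ProxBounded (h : Rn n → EReal) (h' : Rn n → Rn n) (φ : Rn n → EReal) : Prop :=
  ∃ γ : ℝ, 0 < γ ∧ ∃ x, bregEnv h h' φ γ x ≠ ⊥

/-- `f` is `Lf`-smooth relative to the kernel `h`:  `f` is proper, lsc,
`dom f ⊇ dom h`, and `Lf·h ± f` are convex on `int dom h`. -/
def RelSmooth (h f : Rn n → EReal) (Lf : ℝ) : Prop :=
  ERealProper f ∧ LowerSemicontinuous f ∧ edom h ⊆ edom f ∧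
  ERealConvexOn (interior (edom h)) (fun x => (Lf : EReal) * h x + f x) ∧
  ERealConvexOn (interior (edom h)) (fun x => (Lf : EReal) * h x - f x)

/-- Objective function of the Bregman forward-backward subproblem. -/
def fbObj (h : Rn n → EReal) (h' : Rn n → Rn n) (f : Rn n → EReal) (f' : Rn n → Rn n)
    (g : Rn n → EReal) (γ : ℝ) (x z : Rn n) : EReal :=
  f x + ((⟪f' x, z - x⟫ : ℝ) : EReal) + g z + ((1 / γ : ℝ) : EReal) * Dbreg h h' z x

/-- Bregman forward-backward mapping `T_γ`. -/
def fbT (h : Rn n → EReal) (h' : Rn n → Rn n) (f : Rn n → EReal) (f' : Rn n → Rn n)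
    (g : Rn n → EReal) (γ : ℝ) (x : Rn n) : Set (Rn n) :=
  {z | ∀ w, fbObj h h' f f' g γ x z ≤ fbObj h h' f f' g γ x w}

/-- Bregman forward-backward envelope `φ_γ`. -/
def fbEnv (h : Rn n → EReal) (h' : Rn n → Rn n) (f : Rn n → EReal) (f' : Rn n → Rn n)
    (g : Rn n → EReal) (γ : ℝ) (x : Rn n) : EReal :=
  ⨅ z, fbObj h h' f f' g γ x z

end

section MyAux
variable {n : ℕ}

private lemma myGradIneq {U : Set (Rn n)} {g : Rn n → ℝ} (hg : ConvexOn ℝ U g)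
    {x y : Rn n} (hx : x ∈ U) (hy : y ∈ U) {gx : Rn n} (hgx : HasGradientAt g gx x) :
    g x + ⟪gx, y - x⟫ ≤ g y := by
  have hline : HasDerivAt (fun t : ℝ => x + t • (y - x)) (y - x) 0 := by
    simpa using ((hasDerivAt_id (0:ℝ)).smul_const (y - x)).const_add x
  have hψ : HasDerivAt (fun t : ℝ => g (x + t • (y - x))) ⟪gx, y - x⟫ 0 := by
    have h0 : HasFDerivAt g (InnerProductSpace.toDual ℝ _ gx) (x + (0:ℝ) • (y - x)) := by
      simpa using hgx.hasFDerivAt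
    simpa [InnerProductSpace.toDual_apply_apply, Function.comp_def] using h0.comp_hasDerivAt 0 hline
  have hslope := hasDerivAt_iff_tendsto_slope.mp hψ
  have hmono : (𝓝[>] (0:ℝ)) ≤ 𝓝[≠] (0:ℝ) :=
    nhdsWithin_mono _ (fun t ht => ne_of_gt ht)
  have hev : ∀ᶠ t in 𝓝[>] (0:ℝ),
      slope (fun t : ℝ => g (x + t • (y - x))) 0 t ≤ g y - g x := by
    filter_upwards [Ioc_mem_nhdsGT_of_mem (by norm_num : (0:ℝ) ∈ Ico (0:ℝ) 1)] with t ht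
    have ht0 : 0 < t := ht.1
    have hcomb : g ((1 - t) • x + t • y) ≤ (1 - t) * g x + t * g y :=
      hg.2 hx hy (by linarith [ht.2]) (le_of_lt ht0) (by ring)
    have hxt : x + t • (y - x) = (1 - t) • x + t • y := by
      rw [smul_sub, sub_smul, one_smul]; abel
    rw [slope_def_field]
    simp only [zero_smul, add_zero, sub_zero]
    rw [div_le_iff₀ ht0, hxt]
    nlinarith [hcomb]
  have := le_of_tendsto (hslope.mono_left hmono) hev
  linarith

private lemma myBregBound {U : Set (Rn n)} (hUconv : Convex ℝ U) {H : Rn n → ℝ}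
    {h' : Rn n → Rn n} {Lt : ℝ}
    (hd : ∀ z ∈ U, HasGradientAt H (h' z) z) (hcont : ContinuousOn h' U)
    (hLip : ∀ x ∈ U, ∀ y ∈ U, ‖h' x - h' y‖ ≤ Lt * ‖x - y‖)
    {a b : Rn n} (ha : a ∈ U) (hb : b ∈ U) :
    H b - H a - ⟪h' a, b - a⟫ ≤ Lt / 2 * ‖b - a‖ ^ 2 := by
  set c : ℝ → Rn n := fun t => a + t • (b - a) with hc
  have hmem : ∀ t ∈ Icc (0:ℝ) 1, c t ∈ U := by
    intro t ht
    have : (1 - t) • a + t • b ∈ U := hUconv ha hb (by linarith [ht.1, ht.2]) ht.1 (by ring)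
    have he : c t = (1 - t) • a + t • b := by
      simp only [hc, smul_sub, sub_smul, one_smul]; abel
    rwa [he]
  have hline : ∀ t : ℝ, HasDerivAt c (b - a) t := by
    intro t
    simpa [hc] using ((hasDerivAt_id t).smul_const (b - a)).const_add a
  have hψ : ∀ t ∈ Icc (0:ℝ) 1, HasDerivAt (fun s => H (c s)) ⟪h' (c t), b - a⟫ t := by
    intro t ht
    have h0 : HasFDerivAt H (InnerProductSpace.toDual ℝ _ (h' (c t))) (c t) :=
      (hd _ (hmem t ht)).hasFDerivAt
    simpa [InnerProductSpace.toDual_apply_apply, Function.comp_def] using h0.comp_hasDerivAt t (hline t)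
  have hcontc : Continuous c := by
    fun_prop
  have hψ'cont : ContinuousOn (fun t => ⟪h' (c t), b - a⟫) (Icc (0:ℝ) 1) := by
    exact ((hcont.comp hcontc.continuousOn hmem).inner continuousOn_const)
  have hint : IntervalIntegrable (fun t => ⟪h' (c t), b - a⟫) MeasureTheory.volume 0 1 := by
    apply ContinuousOn.intervalIntegrable
    rwa [uIcc_of_le (by norm_num : (0:ℝ) ≤ 1)]
  have hFTC := intervalIntegral.integral_eq_sub_of_hasDerivAt
    (fun t ht => hψ t (by rwa [uIcc_of_le (by norm_num : (0:ℝ) ≤ 1)] at ht)) hint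
  have hc0 : c 0 = a := by simp [hc]
  have hc1 : c 1 = b := by simp [hc]
  have hptwise : ∀ t ∈ Icc (0:ℝ) 1,
      ⟪h' (c t), b - a⟫ ≤ ⟪h' a, b - a⟫ + Lt * t * ‖b - a‖ ^ 2 := by
    intro t ht
    have h1 : ⟪h' (c t), b - a⟫ - ⟪h' a, b - a⟫ = ⟪h' (c t) - h' a, b - a⟫ := by
      rw [inner_sub_left]
    have h2 : ⟪h' (c t) - h' a, b - a⟫ ≤ ‖h' (c t) - h' a‖ * ‖b - a‖ :=
      real_inner_le_norm _ _
    have h3 : ‖h' (c t) - h' a‖ ≤ Lt * ‖c t - a‖ := hLip _ (hmem t ht) _ ha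
    have h4 : ‖c t - a‖ = t * ‖b - a‖ := by
      have : c t - a = t • (b - a) := by simp [hc]
      rw [this, norm_smul, Real.norm_eq_abs, abs_of_nonneg ht.1]
    rw [h4] at h3
    have h5 := mul_le_mul_of_nonneg_right h3 (norm_nonneg (b - a))
    nlinarith [h1, h2, h5]
  have hintRHS : IntervalIntegrable (fun t => ⟪h' a, b - a⟫ + Lt * t * ‖b - a‖ ^ 2)
      MeasureTheory.volume 0 1 := by
    apply Continuous.intervalIntegrable
    fun_prop
  have hmono := intervalIntegral.integral_mono_on (by norm_num : (0:ℝ) ≤ 1) hint hintRHS hptwise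
  have hRHS : ∫ t in (0:ℝ)..1, (⟪h' a, b - a⟫ + Lt * t * ‖b - a‖ ^ 2)
      = ⟪h' a, b - a⟫ + Lt / 2 * ‖b - a‖ ^ 2 := by
    rw [intervalIntegral.integral_add (by apply Continuous.intervalIntegrable; fun_prop)
      (by apply Continuous.intervalIntegrable; fun_prop)]
    simp only [intervalIntegral.integral_const, smul_eq_mul]
    have : ∫ t in (0:ℝ)..1, Lt * t * ‖b - a‖ ^ 2
        = (Lt * ‖b - a‖ ^ 2) * ∫ t in (0:ℝ)..1, t := by
      rw [← intervalIntegral.integral_const_mul]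
      congr 1; ext t; ring
    rw [this, integral_id]
    ring
  rw [hFTC, hRHS, hc0, hc1] at hmono
  linarith

set_option maxHeartbeats 1000000 in
private lemma myPair {U : Set (Rn n)} {F : Rn n → ℝ} {f' : Rn n → Rn n} {M : ℝ} (hM : 0 ≤ M)
    (K : ∀ a ∈ U, ∀ b ∈ U, |F b - F a - ⟪f' a, b - a⟫| ≤ M / 2 * ‖b - a‖ ^ 2)
    {x y : Rn n} (hx : x ∈ U) (hy : y ∈ U)
    (hbx : Metric.closedBall x ‖x - y‖ ⊆ U) (hby : Metric.closedBall y ‖x - y‖ ⊆ U) :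
    ‖f' x - f' y‖ ≤ M * ‖x - y‖ := by
  rcases eq_or_ne x y with rfl | hxy
  · simp
  obtain ⟨d, hd⟩ : ∃ d : ℝ, d = ‖x - y‖ := ⟨_, rfl⟩
  rw [← hd] at hbx hby ⊢
  have hd0 : 0 < d := by
    rw [hd, norm_pos_iff, sub_ne_zero]; exact hxy
  obtain ⟨Pg, hPg⟩ : ∃ Pg : Rn n → Rn n, ∀ z, Pg z = M • z - f' z := ⟨_, fun _ => rfl⟩
  obtain ⟨P, hP⟩ : ∃ P : Rn n → ℝ, ∀ z, P z = M / 2 * ‖z‖ ^ 2 - F z := ⟨_, fun _ => rfl⟩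
  have hiden : ∀ a b : Rn n, P b - P a - ⟪Pg a, b - a⟫
      = M / 2 * ‖b - a‖ ^ 2 - (F b - F a - ⟪f' a, b - a⟫) := by
    intro a b
    have h1 : ⟪Pg a, b - a⟫ = M * ⟪a, b - a⟫ - ⟪f' a, b - a⟫ := by
      rw [hPg, inner_sub_left, real_inner_smul_left]
    have h2 : ‖b - a‖ ^ 2 = ‖b‖ ^ 2 - 2 * ⟪b, a⟫ + ‖a‖ ^ 2 := norm_sub_sq_real b a
    have h3 : ⟪a, b - a⟫ = ⟪a, b⟫ - ‖a‖ ^ 2 := by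
      rw [inner_sub_right, real_inner_self_eq_norm_sq]
    have h4 : ⟪a, b⟫ = ⟪b, a⟫ := real_inner_comm b a
    rw [hP, hP, h1, h3, h4]
    nlinarith [h2]
  have hconv : ∀ a ∈ U, ∀ b ∈ U, P a + ⟪Pg a, b - a⟫ ≤ P b := by
    intro a ha b hb
    have hK := (abs_le.mp (K a ha b hb)).2
    have hid := hiden a b
    linarith
  have key : ∀ δ > 0, ‖f' x - f' y‖ ^ 2 ≤ (M * d) ^ 2 + δ := by
    intro δ hδ
    obtain ⟨ε, hεdef⟩ : ∃ ε : ℝ, ε = min 1 (δ / ((2 * M + 1) * d ^ 2)) := ⟨_, rfl⟩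
    have hden : 0 < (2 * M + 1) * d ^ 2 := by positivity
    have hε0 : 0 < ε := by rw [hεdef]; exact lt_min one_pos (by positivity)
    obtain ⟨L, hLdef⟩ : ∃ L : ℝ, L = 2 * M + ε := ⟨_, rfl⟩
    have hL0 : 0 < L := by rw [hLdef]; positivity
    have h2ML : 2 * M ≤ L := by rw [hLdef]; linarith
    have hdesc : ∀ a ∈ U, ∀ b ∈ U, P b ≤ P a + ⟪Pg a, b - a⟫ + L / 2 * ‖b - a‖ ^ 2 := by
      intro a ha b hb
      have hK := (abs_le.mp (K a ha b hb)).1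
      have hid := hiden a b
      nlinarith [sq_nonneg ‖b - a‖]
    obtain ⟨w, hw⟩ : ∃ w : Rn n, w = Pg x - Pg y := ⟨_, rfl⟩
    -- preliminary bound ‖w‖ ≤ L * d
    have hwle : ‖w‖ ≤ L * d := by
      rcases eq_or_ne w 0 with hw0 | hw0
      · rw [hw0, norm_zero]; positivity
      have hnw : 0 < ‖w‖ := norm_pos_iff.mpr hw0
      obtain ⟨u, hu⟩ : ∃ u : ℝ, u = d / ‖w‖ := ⟨_, rfl⟩
      have hu0 : 0 ≤ u := by rw [hu]; positivity
      have hu1 : u * ‖w‖ = d := by rw [hu]; field_simp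
      obtain ⟨z, hz⟩ : ∃ z : Rn n, z = y + u • w := ⟨_, rfl⟩
      have hzy : z - y = u • w := by rw [hz]; abel
      have hznorm : ‖z - y‖ = d := by
        rw [hzy, norm_smul, Real.norm_eq_abs, abs_of_nonneg hu0, hu1]
      have hzU : z ∈ U := by
        apply hby
        rw [Metric.mem_closedBall, dist_eq_norm, hznorm]
      have I1 := hconv x hx z hzU
      have I2 := hdesc y hy z hzU
      have I3 := hdesc x hx y hy
      have e1 : ⟪Pg x, z - x⟫ = ⟪Pg x, z - y⟫ + ⟪Pg x, y - x⟫ := by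
        rw [← inner_add_right]; congr 1; abel
      have e2 : ⟪Pg x, z - y⟫ - ⟪Pg y, z - y⟫ = d * ‖w‖ := by
        rw [← inner_sub_left, ← hw, hzy, real_inner_smul_right, real_inner_self_eq_norm_sq]
        rw [← hu1]; ring
      have e4 : ‖y - x‖ = d := by rw [norm_sub_rev, ← hd]
      rw [hznorm] at I2
      rw [e4] at I3
      have hdw : d * ‖w‖ ≤ d * (L * d) := by nlinarith [I1, I2, I3, e1, e2]
      exact le_of_mul_le_mul_left hdw hd0
    -- cocoercivity
    have hcoco : ‖w‖ ^ 2 ≤ L * ⟪w, x - y⟫ := by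
      obtain ⟨c, hcdef⟩ : ∃ c : ℝ, c = 1 / L := ⟨_, rfl⟩
      have hc0 : 0 ≤ c := by rw [hcdef]; positivity
      have hcL : L * c = 1 := by rw [hcdef]; field_simp
      obtain ⟨z1, hz1⟩ : ∃ z1 : Rn n, z1 = y + c • w := ⟨_, rfl⟩
      obtain ⟨z2, hz2⟩ : ∃ z2 : Rn n, z2 = x - c • w := ⟨_, rfl⟩
      have hz1y : z1 - y = c • w := by rw [hz1]; abel
      have hz2x : z2 - x = -(c • w) := by rw [hz2]; abel
      have hnorm1 : ‖z1 - y‖ = c * ‖w‖ := by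
        rw [hz1y, norm_smul, Real.norm_eq_abs, abs_of_nonneg hc0]
      have hnorm2 : ‖z2 - x‖ = c * ‖w‖ := by
        rw [hz2x, norm_neg, norm_smul, Real.norm_eq_abs, abs_of_nonneg hc0]
      have hwLd : c * ‖w‖ ≤ d := by
        have h1 : L * (c * ‖w‖) ≤ L * d := by
          rw [← mul_assoc, hcL, one_mul]; exact hwle
        exact le_of_mul_le_mul_left h1 hL0
      have hz1U : z1 ∈ U := by
        apply hby; rw [Metric.mem_closedBall, dist_eq_norm, hnorm1]; exact hwLd
      have hz2U : z2 ∈ U := by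
        apply hbx; rw [Metric.mem_closedBall, dist_eq_norm, hnorm2]; exact hwLd
      have I4 := hconv x hx z1 hz1U
      have I5 := hdesc y hy z1 hz1U
      have I6 := hconv y hy z2 hz2U
      have I7 := hdesc x hx z2 hz2U
      have e1 : ⟪Pg x, z1 - x⟫ = ⟪Pg x, y - x⟫ + c * ⟪Pg x, w⟫ := by
        have hzz : z1 - x = (y - x) + c • w := by rw [hz1]; abel
        rw [hzz, inner_add_right, real_inner_smul_right]
      have e2 : ⟪Pg y, z1 - y⟫ = c * ⟪Pg y, w⟫ := by
        rw [hz1y, real_inner_smul_right]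
      have e3 : ⟪Pg y, z2 - y⟫ = ⟪Pg y, x - y⟫ - c * ⟪Pg y, w⟫ := by
        have hzz : z2 - y = (x - y) - c • w := by rw [hz2]; abel
        rw [hzz, inner_sub_right, real_inner_smul_right]
      have e4 : ⟪Pg x, z2 - x⟫ = -(c * ⟪Pg x, w⟫) := by
        rw [hz2x, inner_neg_right, real_inner_smul_right]
      have e5 : c * ⟪Pg x, w⟫ - c * ⟪Pg y, w⟫ = c * ‖w‖ ^ 2 := by
        rw [← mul_sub, ← inner_sub_left, ← hw, real_inner_self_eq_norm_sq]
      have e6 : ⟪w, x - y⟫ = ⟪Pg x, x - y⟫ - ⟪Pg y, x - y⟫ := by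
        rw [hw, inner_sub_left]
      have e7 : ⟪Pg x, y - x⟫ = -⟪Pg x, x - y⟫ := by
        rw [← inner_neg_right]; congr 1; abel
      rw [e1] at I4
      rw [e2, hnorm1] at I5
      rw [e3] at I6
      rw [e4, hnorm2] at I7
      -- sum of the four inequalities
      have hS : -⟪w, x - y⟫ + 2 * (c * ‖w‖ ^ 2) ≤ L * (c * ‖w‖) ^ 2 := by
        linarith [I4, I5, I6, I7, e5, e6, e7]
      have hLS := mul_le_mul_of_nonneg_left hS hL0.le
      have hm1 : L * (c * ‖w‖ ^ 2) = ‖w‖ ^ 2 := by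
        rw [← mul_assoc, hcL, one_mul]
      have hm2 : L * (L * (c * ‖w‖) ^ 2) = ‖w‖ ^ 2 := by
        have : L * (L * (c * ‖w‖) ^ 2) = (L * c) * ((L * c) * ‖w‖ ^ 2) := by ring
        rw [this, hcL, one_mul, one_mul]
      linarith [hLS, hm1, hm2]
    -- final bound
    have hv : f' x - f' y = M • (x - y) - w := by
      rw [hw, hPg, hPg]
      rw [smul_sub]
      abel
    have hnv : ‖f' x - f' y‖ ^ 2
        = M ^ 2 * d ^ 2 - 2 * (M * ⟪x - y, w⟫) + ‖w‖ ^ 2 := by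
      rw [hv, norm_sub_sq_real, norm_smul, real_inner_smul_left, Real.norm_eq_abs,
        abs_of_nonneg hM, mul_pow, ← hd]
    have hcs : ⟪w, x - y⟫ ≤ ‖w‖ * d := by
      calc ⟪w, x - y⟫ ≤ ‖w‖ * ‖x - y‖ := real_inner_le_norm _ _
        _ = ‖w‖ * d := by rw [← hd]
    have hcomm : ⟪x - y, w⟫ = ⟪w, x - y⟫ := real_inner_comm _ _
    have hεd : ε * (2 * M + ε) * d ^ 2 ≤ δ := by
      have hε1 : ε ≤ 1 := by rw [hεdef]; exact min_le_left _ _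
      have hε2 : ε * ((2 * M + 1) * d ^ 2) ≤ δ := by
        rw [← le_div_iff₀ hden, hεdef]; exact min_le_right _ _
      nlinarith [hε0.le, sq_nonneg d]
    have hinner_le : ⟪w, x - y⟫ ≤ L * d ^ 2 := by
      calc ⟪w, x - y⟫ ≤ ‖w‖ * d := hcs
        _ ≤ L * d * d := by nlinarith [hwle, hd0.le]
        _ = L * d ^ 2 := by ring
    calc ‖f' x - f' y‖ ^ 2 = M ^ 2 * d ^ 2 - 2 * (M * ⟪x - y, w⟫) + ‖w‖ ^ 2 := hnv
      _ ≤ M ^ 2 * d ^ 2 - 2 * (M * ⟪w, x - y⟫) + L * ⟪w, x - y⟫ := by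
          rw [hcomm]; linarith [hcoco]
      _ = M ^ 2 * d ^ 2 + ε * ⟪w, x - y⟫ := by rw [hLdef]; ring
      _ ≤ M ^ 2 * d ^ 2 + ε * (L * d ^ 2) := by nlinarith [hinner_le, hε0.le]
      _ = (M * d) ^ 2 + ε * (2 * M + ε) * d ^ 2 := by rw [hLdef]; ring
      _ ≤ (M * d) ^ 2 + δ := by linarith [hεd]
  have hsq : ‖f' x - f' y‖ ^ 2 ≤ (M * d) ^ 2 := le_of_forall_pos_le_add key
  have h1 := Real.sqrt_le_sqrt hsq
  rwa [Real.sqrt_sq (norm_nonneg _), Real.sqrt_sq (by positivity : (0:ℝ) ≤ M * d)] at h1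

end MyAux

-- STATEMENT 0
theorem stmt0_gradient_lipschitz_of_relSmooth
    {n : ℕ} (h f : Rn n → EReal) (h' f' : Rn n → Rn n) (Lf Lt : ℝ)
    (hLeg : LegendreKernel h h') (hLf : 0 ≤ Lf) (hRel : RelSmooth h f Lf)
    (hf' : ∀ x ∈ interior (edom h), HasGradientAt (fun y => (f y).toReal) (f' x) x)
    (U : Set (Rn n)) (hUopen : IsOpen U) (hUconv : Convex ℝ U)
    (hUC : U ⊆ interior (edom h)) (hLt : 0 ≤ Lt)
    (hLip : ∀ x ∈ U, ∀ y ∈ U, ‖h' x - h' y‖ ≤ Lt * ‖x - y‖) :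
    ∀ x ∈ U, ∀ y ∈ U, ‖f' x - f' y‖ ≤ Lf * Lt * ‖x - y‖ := by
  classical
  -- real-valued versions of h and f
  have hfinh : ∀ z ∈ U, h z = (((h z).toReal : ℝ) : EReal) := by
    intro z hz
    have h0 : z ∈ edom h := interior_subset (hUC hz)
    have h1 : h z < ⊤ := by simpa [edom] using h0
    exact (EReal.coe_toReal (ne_of_lt h1) (hLeg.proper.2 z)).symm
  have hfinf : ∀ z ∈ U, f z = (((f z).toReal : ℝ) : EReal) := by
    intro z hz
    have h0 : z ∈ edom f := hRel.2.2.1 (interior_subset (hUC hz))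
    have h1 : f z < ⊤ := by simpa [edom] using h0
    exact (EReal.coe_toReal (ne_of_lt h1) (hRel.1.2 z)).symm
  -- real convexity of Lf·h ± f on U
  have hGp : ConvexOn ℝ U (fun z => Lf * (h z).toReal + (f z).toReal) := by
    refine ⟨hUconv, ?_⟩
    intro a ha b hb s t hs ht hst
    have hmem : s • a + t • b ∈ U := hUconv ha hb hs ht hst
    have hE := hRel.2.2.2.1 (hUC ha) (hUC hb) hs ht hst
    dsimp only at hE ⊢
    rw [hfinh _ ha, hfinh _ hb, hfinh _ hmem, hfinf _ ha, hfinf _ hb, hfinf _ hmem] at hE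
    simp only [smul_eq_mul]
    exact_mod_cast hE
  have hGm : ConvexOn ℝ U (fun z => Lf * (h z).toReal - (f z).toReal) := by
    refine ⟨hUconv, ?_⟩
    intro a ha b hb s t hs ht hst
    have hmem : s • a + t • b ∈ U := hUconv ha hb hs ht hst
    have hE := hRel.2.2.2.2 (hUC ha) (hUC hb) hs ht hst
    dsimp only at hE ⊢
    rw [hfinh _ ha, hfinh _ hb, hfinh _ hmem, hfinf _ ha, hfinf _ hb, hfinf _ hmem] at hE
    simp only [smul_eq_mul]
    exact_mod_cast hE
  -- gradients of the combinations
  have hdual : ∀ u v : Rn n, (InnerProductSpace.toDual ℝ (Rn n)) (Lf • u + v)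
      = Lf • (InnerProductSpace.toDual ℝ (Rn n)) u + (InnerProductSpace.toDual ℝ (Rn n)) v := by
    intro u v
    ext z
    simp [InnerProductSpace.toDual_apply_apply, inner_add_left, real_inner_smul_left]
  have hdual' : ∀ u v : Rn n, (InnerProductSpace.toDual ℝ (Rn n)) (Lf • u - v)
      = Lf • (InnerProductSpace.toDual ℝ (Rn n)) u - (InnerProductSpace.toDual ℝ (Rn n)) v := by
    intro u v
    ext z
    simp [InnerProductSpace.toDual_apply_apply, inner_sub_left, real_inner_smul_left]
  have hGpg : ∀ a ∈ U, HasGradientAt (fun z => Lf * (h z).toReal + (f z).toReal)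
      (Lf • h' a + f' a) a := by
    intro a ha
    rw [hasGradientAt_iff_hasFDerivAt, hdual]
    have hH := (hLeg.differentiable a (hUC ha)).hasFDerivAt
    have hF := (hf' a (hUC ha)).hasFDerivAt
    exact (hH.const_smul Lf).add hF
  have hGmg : ∀ a ∈ U, HasGradientAt (fun z => Lf * (h z).toReal - (f z).toReal)
      (Lf • h' a - f' a) a := by
    intro a ha
    rw [hasGradientAt_iff_hasFDerivAt, hdual']
    have hH := (hLeg.differentiable a (hUC ha)).hasFDerivAt
    have hF := (hf' a (hUC ha)).hasFDerivAt
    exact (hH.const_smul Lf).sub hF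
  -- sharp Bregman bound for h on U
  have hBH : ∀ a ∈ U, ∀ b ∈ U,
      (h b).toReal - (h a).toReal - ⟪h' a, b - a⟫ ≤ Lt / 2 * ‖b - a‖ ^ 2 :=
    fun a ha b hb => myBregBound hUconv (fun z hz => hLeg.differentiable z (hUC hz))
      (hLeg.gradContinuous.mono hUC) hLip ha hb
  -- two-sided quadratic bound for the Bregman distance of f
  have K : ∀ a ∈ U, ∀ b ∈ U,
      |(f b).toReal - (f a).toReal - ⟪f' a, b - a⟫| ≤ Lf * Lt / 2 * ‖b - a‖ ^ 2 := by
    intro a ha b hb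
    have hp := myGradIneq hGp ha hb (hGpg a ha)
    have hm := myGradIneq hGm ha hb (hGmg a ha)
    have hip : ⟪Lf • h' a + f' a, b - a⟫ = Lf * ⟪h' a, b - a⟫ + ⟪f' a, b - a⟫ := by
      rw [inner_add_left, real_inner_smul_left]
    have him : ⟪Lf • h' a - f' a, b - a⟫ = Lf * ⟪h' a, b - a⟫ - ⟪f' a, b - a⟫ := by
      rw [inner_sub_left, real_inner_smul_left]
    rw [hip] at hp
    rw [him] at hm
    have hmul := mul_le_mul_of_nonneg_left (hBH a ha b hb) hLf
    rw [abs_le]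
    constructor
    · nlinarith [hp, hmul]
    · nlinarith [hm, hmul]
  -- chaining along the segment
  intro x hx y hy
  rcases eq_or_ne x y with rfl | hxy
  · simp
  have hd0 : 0 < ‖x - y‖ := by rw [norm_pos_iff, sub_ne_zero]; exact hxy
  have hseg : segment ℝ x y ⊆ U := hUconv.segment_subset hx hy
  have hcomp : IsCompact (segment ℝ x y) := by
    rw [segment_eq_image' (𝕜 := ℝ) x y]
    exact isCompact_Icc.image (by fun_prop)
  obtain ⟨δ, hδ0, hδ⟩ := hcomp.exists_thickening_subset_open hUopen hseg
  obtain ⟨N, hN⟩ := exists_nat_gt (‖x - y‖ / δ)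
  have hN0 : 0 < (N:ℝ) := lt_trans (by positivity) hN
  have hNne : (N:ℝ) ≠ 0 := ne_of_gt hN0
  have hdN : ‖x - y‖ / N < δ := by
    rw [div_lt_iff₀ hN0]
    rw [div_lt_iff₀ hδ0] at hN
    linarith [hN]
  obtain ⟨c, hcdef⟩ : ∃ c : ℕ → Rn n, c = fun i : ℕ => x + ((i:ℝ)/(N:ℝ)) • (y - x) := ⟨_, rfl⟩
  have hcseg : ∀ i : ℕ, i ≤ N → c i ∈ segment ℝ x y := by
    intro i hi
    rw [segment_eq_image' (𝕜 := ℝ) x y, hcdef]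
    exact ⟨(i:ℝ)/N, ⟨by positivity, by rw [div_le_one hN0]; exact_mod_cast hi⟩, rfl⟩
  have hdiff : ∀ i : ℕ, c i - c (i + 1) = -((1/(N:ℝ)) • (y - x)) := by
    intro i
    have h1 : c i - c (i+1) = (((i:ℝ))/N) • (y - x) - (((i:ℝ)+1)/N) • (y - x) := by
      rw [hcdef]; push_cast; abel
    rw [h1, ← sub_smul, ← neg_smul]
    congr 1
    field_simp
    ring
  have hstepnorm : ∀ i : ℕ, ‖c i - c (i+1)‖ = ‖x - y‖ / N := by
    intro i
    rw [hdiff i, norm_neg, norm_smul, Real.norm_eq_abs,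
      abs_of_nonneg (by positivity : (0:ℝ) ≤ 1/(N:ℝ)), norm_sub_rev]
    field_simp
  have hc0 : c 0 = x := by rw [hcdef]; simp
  have hcN : c N = y := by
    rw [hcdef]
    simp only [div_self hNne, one_smul]
    abel
  have hball : ∀ z ∈ segment ℝ x y, Metric.closedBall z (‖x - y‖/N) ⊆ U := by
    intro z hz
    exact subset_trans (subset_trans (Metric.closedBall_subset_ball hdN)
      (Metric.ball_subset_thickening hz δ)) hδ
  have hpair : ∀ i : ℕ, i < N → ‖f' (c i) - f' (c (i+1))‖ ≤ Lf * Lt * (‖x - y‖/N) := by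
    intro i hi
    have h1 : c i ∈ segment ℝ x y := hcseg i (le_of_lt hi)
    have h2 : c (i+1) ∈ segment ℝ x y := hcseg (i+1) hi
    have hb1 : Metric.closedBall (c i) ‖c i - c (i+1)‖ ⊆ U := by
      rw [hstepnorm i]; exact hball _ h1
    have hb2 : Metric.closedBall (c (i+1)) ‖c i - c (i+1)‖ ⊆ U := by
      rw [hstepnorm i]; exact hball _ h2
    have := myPair (by positivity : (0:ℝ) ≤ Lf * Lt) K (hseg h1) (hseg h2) hb1 hb2
    rw [hstepnorm i] at this
    exact this
  have htel : f' x - f' y = ∑ i ∈ Finset.range N, (f' (c i) - f' (c (i+1))) := by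
    rw [Finset.sum_range_sub' (fun i => f' (c i)) N, hc0, hcN]
  calc ‖f' x - f' y‖ = ‖∑ i ∈ Finset.range N, (f' (c i) - f' (c (i+1)))‖ := by rw [htel]
    _ ≤ ∑ i ∈ Finset.range N, ‖f' (c i) - f' (c (i+1))‖ := norm_sum_le _ _
    _ ≤ ∑ _i ∈ Finset.range N, Lf * Lt * (‖x - y‖/N) :=
        Finset.sum_le_sum (fun i hi => hpair i (Finset.mem_range.mp hi))
    _ = N * (Lf * Lt * (‖x - y‖/N)) := by
        rw [Finset.sum_const, Finset.card_range, nsmul_eq_mul]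
    _ = Lf * Lt * ‖x - y‖ := by field_simp
end

section
/- Let h be a Legendre kernel on ℝⁿ with C := int dom h and let f : ℝⁿ → ℝ∪{+∞} be proper, lsc, with dom f ⊇ dom h and differentiable on C. Then the following are equivalent: (a) L_f·h + f and L_f·h − f are convex on C; (b) |f(y) − f(x) − ⟨∇f(x), y − x⟩| ≤ L_f·D_h(y,x) for all x, y ∈ C; (c) |⟨∇f(x) − ∇f(y), x − y⟩| ≤ L_f·⟨∇h(x) − ∇h(y), x − y⟩ for all x, y ∈ C. -/
open Filter Topology Set Bornology
open scoped RealInnerProductSpace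

section Aux

variable {n : ℕ}

lemma line_hasDerivAt (x y : Rn n) (t : ℝ) :
    HasDerivAt (fun t : ℝ => x + t • (y - x)) (y - x) t := by
  simpa using ((hasDerivAt_id t).smul_const (y - x)).const_add x

lemma phi_hasDerivAt {s : Set (Rn n)} {g : Rn n → ℝ} {g' : Rn n → Rn n}
    (hg : ∀ z ∈ s, HasGradientAt g (g' z) z) {x y : Rn n} {t : ℝ}
    (ht : x + t • (y - x) ∈ s) :
    HasDerivAt (fun t : ℝ => g (x + t • (y - x))) ⟪g' (x + t • (y - x)), y - x⟫ t := by
  have hfd := (hasGradientAt_iff_hasFDerivAt.mp (hg _ ht))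
  have : HasDerivAt (g ∘ fun t : ℝ => x + t • (y - x))
      ((InnerProductSpace.toDual ℝ (Rn n)) (g' (x + t • (y - x))) (y - x)) t :=
    HasFDerivAt.comp_hasDerivAt t hfd (line_hasDerivAt x y t)
  simpa [Function.comp_def, InnerProductSpace.toDual_apply_apply] using this

/-- Gradient inequality from convexity. -/
lemma inner_le_of_convexOn {s : Set (Rn n)} {g : Rn n → ℝ} {g' : Rn n → Rn n}
    (hg : ∀ z ∈ s, HasGradientAt g (g' z) z) (hc : ConvexOn ℝ s g)
    {x y : Rn n} (hx : x ∈ s) (hy : y ∈ s) : ⟪g' x, y - x⟫ ≤ g y - g x := by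
  have h0 : x + (0:ℝ) • (y - x) ∈ s := by simpa using hx
  have hφ := phi_hasDerivAt hg (x := x) (y := y) (t := 0) h0
  rw [hasDerivAt_iff_tendsto_slope] at hφ
  have h2 : Tendsto (slope (fun t : ℝ => g (x + t • (y - x))) 0) (𝓝[>] 0)
      (𝓝 ⟪g' (x + (0:ℝ) • (y - x)), y - x⟫) :=
    hφ.mono_left (nhdsWithin_mono _ (fun t ht => ne_of_gt ht))
  have h3 : ⟪g' (x + (0:ℝ) • (y - x)), y - x⟫ ≤ g y - g x := by
    refine le_of_tendsto h2 ?_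
    filter_upwards [Ioo_mem_nhdsGT one_pos] with t ht
    have hcomb : x + t • (y - x) = (1 - t) • x + t • y := by module
    have hcv : g ((1 - t) • x + t • y) ≤ (1 - t) * g x + t * g y :=
      hc.2 hx hy (by linarith [ht.2]) ht.1.le (by ring)
    rw [slope_def_field]
    simp only [zero_smul, add_zero, sub_zero, hcomb]
    rw [div_le_iff₀ ht.1]
    nlinarith [hcv]
  simpa using h3

/-- Convexity from monotonicity of the gradient, on an open convex set. -/
lemma convexOn_of_monotone_grad {s : Set (Rn n)} (hso : IsOpen s) (hs : Convex ℝ s)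
    {g : Rn n → ℝ} {g' : Rn n → Rn n}
    (hg : ∀ z ∈ s, HasGradientAt g (g' z) z)
    (hm : ∀ x ∈ s, ∀ y ∈ s, 0 ≤ ⟪g' x - g' y, x - y⟫) : ConvexOn ℝ s g := by
  refine ⟨hs, ?_⟩
  intro x hx y hy a b ha hb hab
  rcases eq_or_ne x y with rfl | hxy
  · rw [← add_smul, hab, one_smul, ← add_smul, hab, one_smul]
  set L : ℝ → Rn n := fun t => x + t • (y - x) with hL
  set D : Set ℝ := L ⁻¹' s with hD
  have hDo : IsOpen D := hso.preimage (by fun_prop)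
  have hDc : Convex ℝ D := by
    intro t1 ht1 t2 ht2 c d hc hd hcd
    have hid : L (c * t1 + d * t2) = c • L t1 + d • L t2 := by
      simp only [hL]
      match_scalars <;> ring_nf <;> linarith
    have : L (c * t1 + d * t2) ∈ s := by
      rw [hid]; exact hs ht1 ht2 hc hd hcd
    simpa [hD, smul_eq_mul] using this
  have h0 : (0:ℝ) ∈ D := by simp [hD, hL, hx]
  have h1 : (1:ℝ) ∈ D := by
    have : L 1 = y := by simp [hL]
    simp [hD, this, hy]
  have hder : ∀ t ∈ D, HasDerivAt (fun t => g (L t)) ⟪g' (L t), y - x⟫ t := by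
    intro t ht
    exact phi_hasDerivAt hg ht
  have hcv : ConvexOn ℝ D (fun t => g (L t)) := by
    refine MonotoneOn.convexOn_of_deriv hDc ?_ ?_ ?_
    · intro t ht
      exact ((hder t ht).continuousAt).continuousWithinAt
    · rw [hDo.interior_eq]
      intro t ht
      exact ((hder t ht).differentiableAt).differentiableWithinAt
    · rw [hDo.interior_eq]
      intro t ht u hu htu
      rw [(hder t ht).deriv, (hder u hu).deriv]
      rcases eq_or_lt_of_le htu with rfl | hlt
      · exact le_refl _
      have hdiff : L u - L t = (u - t) • (y - x) := by simp only [hL]; module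
      have hmm := hm (L u) hu (L t) ht
      rw [hdiff, real_inner_smul_right] at hmm
      have h2 : 0 ≤ ⟪g' (L u) - g' (L t), y - x⟫ := by nlinarith [hmm]
      rw [inner_sub_left] at h2
      linarith
  have h2 := hcv.2 h0 h1 ha hb hab
  have hb0 : a • (0:ℝ) + b • 1 = b := by simp
  rw [hb0] at h2
  have hb' : L b = a • x + b • y := by
    simp only [hL]
    match_scalars <;> ring_nf <;> linarith
  have h00 : L 0 = x := by simp [hL]
  have h11 : L 1 = y := by simp [hL]
  simp only [] at h2
  rw [hb', h00, h11] at h2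
  exact h2

/-- Gradient of `c * g₁ - g₂`. -/
lemma hasGradientAt_sub_comb {g₁ g₂ : Rn n → ℝ} {u v x : Rn n} (c : ℝ)
    (h₁ : HasGradientAt g₁ u x) (h₂ : HasGradientAt g₂ v x) :
    HasGradientAt (fun y => c * g₁ y - g₂ y) (c • u - v) x := by
  rw [hasGradientAt_iff_hasFDerivAt] at *
  have := (h₁.const_mul c).sub h₂
  convert this using 1
  ext w
  simp [InnerProductSpace.toDual_apply_apply, inner_sub_left, real_inner_smul_left]
  · rfl
  · rfl
  · rw [map_sub, map_smul]

/-- Gradient of `c * g₁ + g₂`. -/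
lemma hasGradientAt_add_comb {g₁ g₂ : Rn n → ℝ} {u v x : Rn n} (c : ℝ)
    (h₁ : HasGradientAt g₁ u x) (h₂ : HasGradientAt g₂ v x) :
    HasGradientAt (fun y => c * g₁ y + g₂ y) (c • u + v) x := by
  rw [hasGradientAt_iff_hasFDerivAt] at *
  have := (h₁.const_mul c).add h₂
  convert this using 1
  ext w
  simp [InnerProductSpace.toDual_apply_apply, inner_add_left, real_inner_smul_left]
  · rfl
  · rfl
  · rw [map_add, map_smul]


lemma erealConvexOn_iff_real {n : ℕ} {C : Set (Rn n)} (hC : Convex ℝ C) {φ : Rn n → EReal}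
    {ψ : Rn n → ℝ} (hfin : ∀ x ∈ C, φ x = (ψ x : EReal)) :
    ERealConvexOn C φ ↔ ConvexOn ℝ C ψ := by
  constructor
  · intro H
    refine ⟨hC, ?_⟩
    intro x hx y hy a b ha hb hab
    have hz : a • x + b • y ∈ C := hC hx hy ha hb hab
    have h2 := H hx hy ha hb hab
    rw [hfin _ hz, hfin _ hx, hfin _ hy, ← EReal.coe_mul, ← EReal.coe_mul, ← EReal.coe_add,
      EReal.coe_le_coe_iff] at h2
    simpa using h2
  · intro H x hx y hy a b ha hb hab
    have hz : a • x + b • y ∈ C := hC hx hy ha hb hab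
    rw [hfin _ hz, hfin _ hx, hfin _ hy, ← EReal.coe_mul, ← EReal.coe_mul, ← EReal.coe_add]
    exact_mod_cast H.2 hx hy ha hb hab

lemma edom_convex {n : ℕ} {h : Rn n → EReal} (hb : ∀ x, h x ≠ ⊥)
    (hc : ERealConvexOn Set.univ h) : Convex ℝ (edom h) := by
  intro x hx y hy a b ha hb' hab
  have h2 := hc (Set.mem_univ x) (Set.mem_univ y) ha hb' hab
  have hxt : h x ≠ ⊤ := ne_of_lt hx
  have hyt : h y ≠ ⊤ := ne_of_lt hy
  rw [← EReal.coe_toReal hxt (hb x), ← EReal.coe_toReal hyt (hb y), ← EReal.coe_mul,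
    ← EReal.coe_mul, ← EReal.coe_add] at h2
  exact lt_of_le_of_lt h2 (EReal.coe_lt_top _)

end Aux

-- STATEMENT 1
theorem stmt1_relSmooth_characterizations
    {n : ℕ} (h f : Rn n → EReal) (h' f' : Rn n → Rn n) (Lf : ℝ)
    (hLeg : LegendreKernel h h') (hLf : 0 ≤ Lf)
    (hfp : ERealProper f) (hflsc : LowerSemicontinuous f) (hdom : edom h ⊆ edom f)
    (hf' : ∀ x ∈ interior (edom h), HasGradientAt (fun y => (f y).toReal) (f' x) x) :
    ((ERealConvexOn (interior (edom h)) (fun x => (Lf : EReal) * h x + f x) ∧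
      ERealConvexOn (interior (edom h)) (fun x => (Lf : EReal) * h x - f x))
      ↔ (∀ x ∈ interior (edom h), ∀ y ∈ interior (edom h),
          |(f y).toReal - (f x).toReal - ⟪f' x, y - x⟫|
            ≤ Lf * ((h y).toReal - (h x).toReal - ⟪h' x, y - x⟫)))
    ∧
    ((∀ x ∈ interior (edom h), ∀ y ∈ interior (edom h),
          |(f y).toReal - (f x).toReal - ⟪f' x, y - x⟫|
            ≤ Lf * ((h y).toReal - (h x).toReal - ⟪h' x, y - x⟫))
      ↔ (∀ x ∈ interior (edom h), ∀ y ∈ interior (edom h),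
          |⟪f' x - f' y, x - y⟫| ≤ Lf * ⟪h' x - h' y, x - y⟫)) := by
  
  classical
  set C := interior (edom h) with hCdef
  have hCc : Convex ℝ C := (edom_convex hLeg.proper.2 hLeg.convex).interior
  have hCo : IsOpen C := isOpen_interior
  have hfinh : ∀ x ∈ C, h x = (((h x).toReal : ℝ) : EReal) := by
    intro x hx
    have hmem' : x ∈ edom h := interior_subset hx
    have hmem : h x < ⊤ := hmem'
    exact (EReal.coe_toReal (ne_of_lt hmem) (hLeg.proper.2 x)).symm
  have hfinf : ∀ x ∈ C, f x = (((f x).toReal : ℝ) : EReal) := by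
    intro x hx
    have hmem' : x ∈ edom f := hdom (interior_subset hx)
    have hmem : f x < ⊤ := hmem'
    exact (EReal.coe_toReal (ne_of_lt hmem) (hfp.2 x)).symm
  have bridgeP : ERealConvexOn C (fun x => (Lf : EReal) * h x + f x)
      ↔ ConvexOn ℝ C (fun x => Lf * (h x).toReal + (f x).toReal) := by
    refine erealConvexOn_iff_real hCc ?_
    intro x hx
    rw [EReal.coe_add, EReal.coe_mul, ← hfinh x hx, ← hfinf x hx]
  have bridgeM : ERealConvexOn C (fun x => (Lf : EReal) * h x - f x)
      ↔ ConvexOn ℝ C (fun x => Lf * (h x).toReal - (f x).toReal) := by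
    refine erealConvexOn_iff_real hCc ?_
    intro x hx
    rw [EReal.coe_sub, EReal.coe_mul, ← hfinh x hx, ← hfinf x hx]
  have hGM : ∀ x ∈ C, HasGradientAt (fun y => Lf * (h y).toReal - (f y).toReal)
      (Lf • h' x - f' x) x :=
    fun x hx => hasGradientAt_sub_comb Lf (hLeg.differentiable x hx) (hf' x hx)
  have hGP : ∀ x ∈ C, HasGradientAt (fun y => Lf * (h y).toReal + (f y).toReal)
      (Lf • h' x + f' x) x :=
    fun x hx => hasGradientAt_add_comb Lf (hLeg.differentiable x hx) (hf' x hx)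
  have cvM_gi : ConvexOn ℝ C (fun x => Lf * (h x).toReal - (f x).toReal) →
      ∀ x ∈ C, ∀ y ∈ C, (f y).toReal - (f x).toReal - ⟪f' x, y - x⟫
        ≤ Lf * ((h y).toReal - (h x).toReal - ⟪h' x, y - x⟫) := by
    intro hcv x hx y hy
    have h2 := inner_le_of_convexOn hGM hcv hx hy
    rw [inner_sub_left, real_inner_smul_left] at h2
    nlinarith [h2]
  have cvP_gi : ConvexOn ℝ C (fun x => Lf * (h x).toReal + (f x).toReal) →
      ∀ x ∈ C, ∀ y ∈ C, -((f y).toReal - (f x).toReal - ⟪f' x, y - x⟫)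
        ≤ Lf * ((h y).toReal - (h x).toReal - ⟪h' x, y - x⟫) := by
    intro hcv x hx y hy
    have h2 := inner_le_of_convexOn hGP hcv hx hy
    rw [inner_add_left, real_inner_smul_left] at h2
    nlinarith [h2]
  have giM_mo : (∀ x ∈ C, ∀ y ∈ C, (f y).toReal - (f x).toReal - ⟪f' x, y - x⟫
        ≤ Lf * ((h y).toReal - (h x).toReal - ⟪h' x, y - x⟫)) →
      ∀ x ∈ C, ∀ y ∈ C, ⟪f' x - f' y, x - y⟫ ≤ Lf * ⟪h' x - h' y, x - y⟫ := by
    intro hgi x hx y hy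
    have h1 := hgi x hx y hy
    have h2 := hgi y hy x hx
    simp only [inner_sub_left, inner_sub_right] at h1 h2 ⊢
    nlinarith [h1, h2]
  have giP_mo : (∀ x ∈ C, ∀ y ∈ C, -((f y).toReal - (f x).toReal - ⟪f' x, y - x⟫)
        ≤ Lf * ((h y).toReal - (h x).toReal - ⟪h' x, y - x⟫)) →
      ∀ x ∈ C, ∀ y ∈ C, -⟪f' x - f' y, x - y⟫ ≤ Lf * ⟪h' x - h' y, x - y⟫ := by
    intro hgi x hx y hy
    have h1 := hgi x hx y hy
    have h2 := hgi y hy x hx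
    simp only [inner_sub_left, inner_sub_right] at h1 h2 ⊢
    nlinarith [h1, h2]
  have moM_cv : (∀ x ∈ C, ∀ y ∈ C, ⟪f' x - f' y, x - y⟫ ≤ Lf * ⟪h' x - h' y, x - y⟫) →
      ConvexOn ℝ C (fun x => Lf * (h x).toReal - (f x).toReal) := by
    intro hmo
    refine convexOn_of_monotone_grad hCo hCc hGM ?_
    intro x hx y hy
    have h2 := hmo x hx y hy
    simp only [inner_sub_left, inner_sub_right, real_inner_smul_left] at h2 ⊢
    nlinarith [h2]
  have moP_cv : (∀ x ∈ C, ∀ y ∈ C, -⟪f' x - f' y, x - y⟫ ≤ Lf * ⟪h' x - h' y, x - y⟫) →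
      ConvexOn ℝ C (fun x => Lf * (h x).toReal + (f x).toReal) := by
    intro hmo
    refine convexOn_of_monotone_grad hCo hCc hGP ?_
    intro x hx y hy
    have h2 := hmo x hx y hy
    simp only [inner_add_left, inner_sub_left, inner_sub_right, real_inner_smul_left] at h2 ⊢
    nlinarith [h2]
  have hb_iff : (∀ x ∈ C, ∀ y ∈ C, |(f y).toReal - (f x).toReal - ⟪f' x, y - x⟫|
        ≤ Lf * ((h y).toReal - (h x).toReal - ⟪h' x, y - x⟫))
      ↔ ((∀ x ∈ C, ∀ y ∈ C, (f y).toReal - (f x).toReal - ⟪f' x, y - x⟫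
            ≤ Lf * ((h y).toReal - (h x).toReal - ⟪h' x, y - x⟫)) ∧
         (∀ x ∈ C, ∀ y ∈ C, -((f y).toReal - (f x).toReal - ⟪f' x, y - x⟫)
            ≤ Lf * ((h y).toReal - (h x).toReal - ⟪h' x, y - x⟫))) := by
    constructor
    · intro hb
      exact ⟨fun x hx y hy => (abs_le.1 (hb x hx y hy)).2,
        fun x hx y hy => by linarith [(abs_le.1 (hb x hx y hy)).1]⟩
    · rintro ⟨h1, h2⟩ x hx y hy
      rw [abs_le]
      exact ⟨by linarith [h2 x hx y hy], h1 x hx y hy⟩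
  have hc_iff : (∀ x ∈ C, ∀ y ∈ C, |⟪f' x - f' y, x - y⟫| ≤ Lf * ⟪h' x - h' y, x - y⟫)
      ↔ ((∀ x ∈ C, ∀ y ∈ C, ⟪f' x - f' y, x - y⟫ ≤ Lf * ⟪h' x - h' y, x - y⟫) ∧
         (∀ x ∈ C, ∀ y ∈ C, -⟪f' x - f' y, x - y⟫ ≤ Lf * ⟪h' x - h' y, x - y⟫)) := by
    constructor
    · intro hb
      exact ⟨fun x hx y hy => (abs_le.1 (hb x hx y hy)).2,
        fun x hx y hy => by linarith [(abs_le.1 (hb x hx y hy)).1]⟩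
    · rintro ⟨h1, h2⟩ x hx y hy
      rw [abs_le]
      exact ⟨by linarith [h2 x hx y hy], h1 x hx y hy⟩
  constructor
  · constructor
    · rintro ⟨cP, cM⟩
      exact hb_iff.2 ⟨cvM_gi (bridgeM.1 cM), cvP_gi (bridgeP.1 cP)⟩
    · intro hb
      obtain ⟨g1, g2⟩ := hb_iff.1 hb
      exact ⟨bridgeP.2 (moP_cv (giP_mo g2)), bridgeM.2 (moM_cv (giM_mo g1))⟩
  · constructor
    · intro hb
      obtain ⟨g1, g2⟩ := hb_iff.1 hb
      exact hc_iff.2 ⟨giM_mo g1, giP_mo g2⟩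
    · intro hc
      obtain ⟨m1, m2⟩ := hc_iff.1 hc
      exact hb_iff.2 ⟨cvM_gi (moM_cv m1), cvP_gi (moP_cv m2)⟩
end

section
/- Under the standing assumptions, let γ ∈ (0, 1/L_f). Then for every x ∈ C and every x̄ ∈ T_γ(x): ((1 − γL_f)/γ)·D_h(x̄, x) ≤ φ_γ(x) − φ(x̄) ≤ ((1 + γL_f)/γ)·D_h(x̄, x). -/
open Filter Topology Set Bornology
open scoped RealInnerProductSpace

-- Auxiliary lemmas
section Aux
open InnerProductSpace

variable {n : ℕ}

private lemma grad_ineq {s : Set (Rn n)} {F : Rn n → ℝ} (hF : ConvexOn ℝ s F)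
    {x y : Rn n} (hx : x ∈ s) (hy : y ∈ s) {G : Rn n} (hG : HasGradientAt F G x) :
    F x + ⟪G, y - x⟫ ≤ F y := by
  set v := y - x with hv
  have hline : HasDerivAt (fun t : ℝ => x + t • v) v 0 := by
    simpa using ((hasDerivAt_id (0:ℝ)).smul_const v).const_add x
  have hFd : HasFDerivAt F (toDual ℝ (Rn n) G) x := hasGradientAt_iff_hasFDerivAt.mp hG
  have hcomp : HasDerivAt (fun t : ℝ => F (x + t • v)) (⟪G, v⟫) 0 := by
    have hFd' : HasFDerivAt F (toDual ℝ (Rn n) G) (x + (0:ℝ) • v) := by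
      simpa using hFd
    have := hFd'.comp_hasDerivAt 0 hline
    simpa [toDual_apply_apply, Function.comp_def] using this
  have hslope : ∀ t ∈ Set.Ioc (0:ℝ) 1,
      slope (fun t : ℝ => F (x + t • v)) 0 t ≤ F y - F x := by
    intro t ht
    have h1 : x + t • v = (1 - t) • x + t • y := by rw [hv]; module
    have h2 : F ((1 - t) • x + t • y) ≤ (1 - t) * F x + t * F y :=
      hF.2 hx hy (by linarith [ht.2]) ht.1.le (by ring)
    rw [slope_def_field]
    have h0 : x + (0:ℝ) • v = x := by simp
    rw [h1, h0]
    rw [div_le_iff₀ (by simpa using ht.1)]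
    calc F ((1 - t) • x + t • y) - F x ≤ (1 - t) * F x + t * F y - F x := by linarith
    _ = (F y - F x) * (t - 0) := by ring
  have htend := hasDerivAt_iff_tendsto_slope.mp hcomp
  have htend' : Tendsto (slope (fun t : ℝ => F (x + t • v)) 0) (𝓝[>] (0:ℝ))
      (𝓝 (⟪G, v⟫)) :=
    htend.mono_left (nhdsWithin_mono 0 (fun t ht => ne_of_gt ht))
  have hle : ⟪G, v⟫ ≤ F y - F x := by
    refine le_of_tendsto htend' ?_
    filter_upwards [Ioc_mem_nhdsGT_of_mem ⟨le_refl 0, one_pos⟩] with t ht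
    exact hslope t ht
  linarith

private lemma ereal_toReal_convexOn {s : Set (Rn n)} (hs : Convex ℝ s) {φ : Rn n → EReal}
    {ψ : Rn n → ℝ} (hφ : ERealConvexOn s φ) (heq : ∀ x ∈ s, φ x = (ψ x : EReal)) :
    ConvexOn ℝ s ψ := by
  refine ⟨hs, fun x hx y hy a b ha hb hab => ?_⟩
  have h1 := hφ hx hy ha hb hab
  rw [heq _ hx, heq _ hy, heq _ (hs hx hy ha hb hab), ← EReal.coe_mul, ← EReal.coe_mul,
    ← EReal.coe_add] at h1
  exact_mod_cast h1

private lemma ereal_shuffle1 (a b : ℝ) (G : EReal) :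
    (a : EReal) + G + (b : EReal) = G + ((a + b : ℝ) : EReal) := by
  rw [add_comm (a : EReal) G, add_assoc, ← EReal.coe_add]

private lemma ereal_shuffle2 (a c b : ℝ) (G : EReal) :
    (a : EReal) + (c : EReal) + G + (b : EReal) = G + ((a + c + b : ℝ) : EReal) := by
  rw [show (a : EReal) + (c : EReal) = ((a + c : ℝ) : EReal) from (EReal.coe_add a c).symm]
  exact ereal_shuffle1 (a + c) b G

end Aux

-- STATEMENT 12
theorem stmt12_fbe_sandwich
    {n : ℕ} (h : Rn n → EReal) (h' : Rn n → Rn n) (f : Rn n → EReal) (f' : Rn n → Rn n)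
    (g : Rn n → EReal) (Lf γ : ℝ)
    (hLeg : LegendreKernel h h') (hLf : 0 ≤ Lf) (hRel : RelSmooth h f Lf)
    (hf' : ∀ x ∈ interior (edom h), HasGradientAt (fun y => (f y).toReal) (f' x) x)
    (hg : ERealProper g) (hglsc : LowerSemicontinuous g)
    (hmin : ∃ xm ∈ closure (interior (edom h)),
      ∀ y ∈ closure (interior (edom h)), f xm + g xm ≤ f y + g y)
    (hγ : 0 < γ) (hγL : γ * Lf < 1)
    (hrange : ∀ x ∈ interior (edom h), fbT h h' f f' g γ x ⊆ interior (edom h)) :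
    ∀ x ∈ interior (edom h), ∀ xb ∈ fbT h h' f f' g γ x,
      (f xb + g xb) + (((1 - γ * Lf) / γ : ℝ) : EReal) * Dbreg h h' xb x
        ≤ fbEnv h h' f f' g γ x
      ∧ fbEnv h h' f f' g γ x
        ≤ (f xb + g xb) + (((1 + γ * Lf) / γ : ℝ) : EReal) * Dbreg h h' xb x := by
  intro x hx xb hxbT
  have hxbC : xb ∈ interior (edom h) := hrange x hx hxbT
  obtain ⟨hprop, hflsc, hdom, hconvp, hconvm⟩ := hRel
  have hfin : ∀ z ∈ interior (edom h),
      h z = ((h z).toReal : EReal) ∧ f z = ((f z).toReal : EReal) := by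
    intro z hz
    have hz' : z ∈ edom h := interior_subset hz
    have hz'' : z ∈ edom f := hdom hz'
    exact ⟨(EReal.coe_toReal hz'.ne (hLeg.proper.2 z)).symm,
      (EReal.coe_toReal hz''.ne (hprop.2 z)).symm⟩
  have hCedom : Convex ℝ (edom h) := by
    intro u hu w hw a b ha hb hab
    have h1 := hLeg.convex (Set.mem_univ u) (Set.mem_univ w) ha hb hab
    have hu' : h u = ((h u).toReal : EReal) := (EReal.coe_toReal hu.ne (hLeg.proper.2 u)).symm
    have hw' : h w = ((h w).toReal : EReal) := (EReal.coe_toReal hw.ne (hLeg.proper.2 w)).symm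
    show h (a • u + b • w) < ⊤
    calc h (a • u + b • w) ≤ (a : EReal) * h u + (b : EReal) * h w := h1
    _ < ⊤ := by
        rw [hu', hw', ← EReal.coe_mul, ← EReal.coe_mul, ← EReal.coe_add]
        exact EReal.coe_lt_top _
  have hC : Convex ℝ (interior (edom h)) := hCedom.interior
  -- real convexity of Lf*H ± F on the interior
  have heqm : ∀ z ∈ interior (edom h),
      ((Lf : EReal) * h z - f z) = ((Lf * (h z).toReal - (f z).toReal : ℝ) : EReal) := by
    intro z hz
    conv_lhs => rw [(hfin z hz).1, (hfin z hz).2]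
    rw [← EReal.coe_mul, ← EReal.coe_sub]
  have heqp : ∀ z ∈ interior (edom h),
      ((Lf : EReal) * h z + f z) = ((Lf * (h z).toReal + (f z).toReal : ℝ) : EReal) := by
    intro z hz
    conv_lhs => rw [(hfin z hz).1, (hfin z hz).2]
    rw [← EReal.coe_mul, ← EReal.coe_add]
  have hcvm : ConvexOn ℝ (interior (edom h))
      (fun z => Lf * (h z).toReal - (f z).toReal) :=
    ereal_toReal_convexOn hC hconvm heqm
  have hcvp : ConvexOn ℝ (interior (edom h))
      (fun z => Lf * (h z).toReal + (f z).toReal) :=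
    ereal_toReal_convexOn hC hconvp heqp
  -- gradients of the combinations at x
  have hHd : HasFDerivAt (fun y => (h y).toReal)
      (InnerProductSpace.toDual ℝ (Rn n) (h' x)) x :=
    hasGradientAt_iff_hasFDerivAt.mp (hLeg.differentiable x hx)
  have hFd : HasFDerivAt (fun y => (f y).toReal)
      (InnerProductSpace.toDual ℝ (Rn n) (f' x)) x :=
    hasGradientAt_iff_hasFDerivAt.mp (hf' x hx)
  have hgm : HasGradientAt (fun z => Lf * (h z).toReal - (f z).toReal)
      (Lf • h' x - f' x) x := by
    rw [hasGradientAt_iff_hasFDerivAt]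
    simpa [smul_eq_mul, map_sub, map_smul, Pi.sub_def] using (hHd.const_mul Lf).sub hFd
  have hgp : HasGradientAt (fun z => Lf * (h z).toReal + (f z).toReal)
      (Lf • h' x + f' x) x := by
    rw [hasGradientAt_iff_hasFDerivAt]
    simpa [smul_eq_mul, map_add, map_smul, Pi.add_def] using (hHd.const_mul Lf).add hFd
  set Hr := (h x).toReal with hHr
  set Hb := (h xb).toReal with hHb
  set Fr := (f x).toReal with hFr
  set Fb := (f xb).toReal with hFb
  set iph := (⟪h' x, xb - x⟫ : ℝ) with hiph
  set ip := (⟪f' x, xb - x⟫ : ℝ) with hip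
  set dd := Hb - Hr - iph with hdd
  have ineqm := grad_ineq hcvm hx hxbC hgm
  have ineqp := grad_ineq hcvp hx hxbC hgp
  have hinm : (⟪Lf • h' x - f' x, xb - x⟫ : ℝ) = Lf * iph - ip := by
    rw [inner_sub_left, real_inner_smul_left]
  have hinp : (⟪Lf • h' x + f' x, xb - x⟫ : ℝ) = Lf * iph + ip := by
    rw [inner_add_left, real_inner_smul_left]
  rw [hinm] at ineqm
  rw [hinp] at ineqp
  have hLd : Lf * dd = Lf * Hb - Lf * Hr - Lf * iph := by rw [hdd]; ring
  have keyI : Fb ≤ Fr + ip + Lf * dd := by linarith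
  have keyII : Fr + ip ≤ Fb + Lf * dd := by linarith
  -- the envelope equals the objective at xb
  have henv : fbEnv h h' f f' g γ x = fbObj h h' f f' g γ x xb :=
    le_antisymm (iInf_le _ xb) (le_iInf hxbT)
  have hD : Dbreg h h' xb x = ((dd : ℝ) : EReal) := by
    simp only [Dbreg, if_pos hx]
    conv_lhs => rw [(hfin xb hxbC).1, (hfin x hx).1]
    rw [← EReal.coe_sub, ← EReal.coe_sub]
  have hobj : fbObj h h' f f' g γ x xb
      = g xb + ((Fr + ip + 1 / γ * dd : ℝ) : EReal) := by
    simp only [fbObj, hD]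
    conv_lhs => rw [(hfin x hx).2]
    rw [← EReal.coe_mul]
    exact ereal_shuffle2 Fr ip (1 / γ * dd) (g xb)
  have hγ' : γ ≠ 0 := ne_of_gt hγ
  constructor
  · rw [henv, hobj, hD, (hfin xb hxbC).2, ← EReal.coe_mul, ereal_shuffle1]
    refine add_le_add_right (EReal.coe_le_coe_iff.mpr ?_) _
    have hc : (1 - γ * Lf) / γ * dd + Lf * dd = 1 / γ * dd := by
      field_simp; ring
    linarith
  · rw [henv, hobj, hD, (hfin xb hxbC).2, ← EReal.coe_mul, ereal_shuffle1]
    refine add_le_add_right (EReal.coe_le_coe_iff.mpr ?_) _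
    have hc : (1 + γ * Lf) / γ * dd - Lf * dd = 1 / γ * dd := by
      field_simp; ring
    linarith
end

section
/- Under the standing assumptions, if x⋆ ∈ C is a local minimum of φ, then there exists γ₀ ∈ (0, 1/L_f] such that for every γ ∈ (0, γ₀), x⋆ is a nondegenerate fixed point of the Bregman forward-backward mapping, i.e., T_γ(x⋆) = {x⋆}. -/
open Filter Topology Set Bornology
open scoped RealInnerProductSpace

noncomputable section AuxSec
variable {n : ℕ}
section Helpers


lemma helper_mem_closure_interior {s : Set (Rn n)} (hs : Convex ℝ s)
    {x w : Rn n} (hx : x ∈ interior s) (hw : w ∈ s) : w ∈ closure (interior s) := by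
  have h0 : Tendsto (fun k : ℕ => ((1:ℝ)/(k+1))) atTop (𝓝 0) :=
    tendsto_one_div_add_atTop_nhds_zero_nat
  have hseq : Tendsto (fun k : ℕ => w + ((1:ℝ)/(k+1)) • (x - w)) atTop (𝓝 w) := by
    have h1 : Tendsto (fun k : ℕ => ((1:ℝ)/(k+1)) • (x - w)) atTop (𝓝 0) := by
      simpa using h0.smul_const (x - w)
    simpa using tendsto_const_nhds.add h1
  refine mem_closure_of_tendsto hseq (Filter.Eventually.of_forall fun k => ?_)
  have hk : (0:ℝ) < 1/(k+1) := by positivity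
  have hk1 : (1:ℝ)/(k+1) ≤ 1 := by
    rw [div_le_one (by positivity)]; linarith [Nat.cast_nonneg (α := ℝ) k]
  have hmem : ((1:ℝ)/(k+1)) • x + (1 - 1/((k:ℝ)+1)) • w ∈ interior s :=
    hs.combo_interior_self_mem_interior (a := (1:ℝ)/(k+1)) (b := 1 - 1/((k:ℝ)+1)) hx hw hk
      (by linarith) (by ring)
  have heq : w + ((1:ℝ)/(k+1)) • (x - w) = ((1:ℝ)/(k+1)) • x + (1 - 1/((k:ℝ)+1)) • w := by
    module
  rw [heq]; exact hmem

lemma helper_grad_ineq {s : Set (Rn n)} {ψ : Rn n → ℝ} (hψ : ConvexOn ℝ s ψ)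
    {x G : Rn n} (hx : x ∈ s) (hG : HasGradientAt ψ G x) {w : Rn n} (hw : w ∈ s) :
    ψ x + ⟪G, w - x⟫ ≤ ψ w := by
  set v := w - x with hv
  have hline : HasDerivAt (fun t : ℝ => x + t • v) v 0 := by
    simpa using ((hasDerivAt_id (0:ℝ)).smul_const v).const_add x
  have hG' : HasFDerivAt ψ ((InnerProductSpace.toDual ℝ (Rn n)) G) (x + (0:ℝ) • v) := by
    simpa using hG.hasFDerivAt
  have hq : HasDerivAt (fun t : ℝ => ψ (x + t • v)) ⟪G, v⟫ 0 := by
    have := hG'.comp_hasDerivAt 0 hline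
    simpa [InnerProductSpace.toDual_apply_apply, Function.comp_def] using this
  have hslope : Tendsto (slope (fun t : ℝ => ψ (x + t • v)) 0) (𝓝[>] 0) (𝓝 ⟪G, v⟫) :=
    (hasDerivAt_iff_tendsto_slope.1 hq).mono_left
      (nhdsWithin_mono _ (fun t ht => by simpa using ne_of_gt ht))
  have hev : ∀ᶠ t in 𝓝[>] (0:ℝ), slope (fun t => ψ (x + t • v)) 0 t ≤ ψ w - ψ x := by
    filter_upwards [Ioo_mem_nhdsGT_of_mem (by norm_num : (0:ℝ) ∈ Ico 0 1)] with t ht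
    have hcombo : x + t • v = (1 - t) • x + t • w := by rw [hv]; module
    have hmem := hψ.2 hx hw (by linarith [ht.2] : (0:ℝ) ≤ 1 - t) (le_of_lt ht.1) (by ring)
    rw [← hcombo] at hmem
    simp only [smul_eq_mul] at hmem
    have h0v : x + (0:ℝ) • v = x := by simp
    rw [slope_def_field, h0v, div_le_iff₀ (by simpa using ht.1)]
    nlinarith [ht.1, ht.2]
  have := le_of_tendsto hslope hev
  linarith

end Helpers

section Aux
variable {n : ℕ}

/-- Real-valued Bregman distance helper. -/
private noncomputable def DrF (h : Rn n → EReal) (h' : Rn n → Rn n) (xs z : Rn n) : ℝ :=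
  (h z).toReal - (h xs).toReal - ⟪h' xs, z - xs⟫

private lemma aux_coe_of_edom {h : Rn n → EReal} (hb : ∀ x, h x ≠ ⊥) {z : Rn n}
    (hz : z ∈ edom h) : h z = (((h z).toReal : ℝ) : EReal) :=
  (EReal.coe_toReal (ne_of_lt hz) (hb z)).symm

private lemma aux_edom_convex {h : Rn n → EReal} (hconv : ERealConvexOn Set.univ h)
    (hb : ∀ x, h x ≠ ⊥) : Convex ℝ (edom h) := by
  intro x hx y hy a b ha hb' hab
  have hle := hconv (mem_univ x) (mem_univ y) ha hb' hab
  have hx' : h x < ⊤ := hx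
  have hy' : h y < ⊤ := hy
  refine lt_of_le_of_lt hle ?_
  rw [aux_coe_of_edom hb hx, aux_coe_of_edom hb hy, ← EReal.coe_mul, ← EReal.coe_mul,
    ← EReal.coe_add]
  exact EReal.coe_lt_top _

private lemma aux_convexOn_toReal {s : Set (Rn n)} (hs : Convex ℝ s) {F : Rn n → EReal}
    (hfin : ∀ x ∈ s, F x ≠ ⊤ ∧ F x ≠ ⊥)
    (hconv : ∀ ⦃x⦄, x ∈ s → ∀ ⦃y⦄, y ∈ s → ∀ ⦃a b : ℝ⦄, 0 ≤ a → 0 ≤ b → a + b = 1 →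
      F (a • x + b • y) ≤ (a : EReal) * F x + (b : EReal) * F y) :
    ConvexOn ℝ s (fun x => (F x).toReal) := by
  refine ⟨hs, fun x hx y hy a b ha hb hab => ?_⟩
  have hm : a • x + b • y ∈ s := hs hx hy ha hb hab
  have hle := hconv hx hy ha hb hab
  obtain ⟨hxt, hxb⟩ := hfin x hx
  obtain ⟨hyt, hyb⟩ := hfin y hy
  obtain ⟨hmt, hmb⟩ := hfin _ hm
  rw [← EReal.coe_toReal hxt hxb, ← EReal.coe_toReal hyt hyb, ← EReal.coe_toReal hmt hmb,
    ← EReal.coe_mul, ← EReal.coe_mul, ← EReal.coe_add, EReal.coe_le_coe_iff] at hle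
  simpa [smul_eq_mul] using hle

private lemma aux_hr_convexOn {h : Rn n → EReal} {h' : Rn n → Rn n}
    (hLeg : LegendreKernel h h') : ConvexOn ℝ (edom h) (fun x => (h x).toReal) :=
  aux_convexOn_toReal (aux_edom_convex hLeg.convex hLeg.proper.2)
    (fun x hx => ⟨ne_of_lt hx, hLeg.proper.2 x⟩)
    (fun x _ y _ a b ha hb hab => hLeg.convex (mem_univ x) (mem_univ y) ha hb hab)

/-- Gradient inequality for the kernel: `D_h(z, xs) ≥ 0`. -/
private lemma aux_D_nonneg {h : Rn n → EReal} {h' : Rn n → Rn n}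
    (hLeg : LegendreKernel h h') {xs : Rn n} (hxs : xs ∈ interior (edom h))
    {z : Rn n} (hz : z ∈ edom h) : 0 ≤ DrF h h' xs z := by
  have hgi := helper_grad_ineq (aux_hr_convexOn hLeg) (interior_subset hxs)
    (hLeg.differentiable xs hxs) hz
  simp only [DrF]; linarith

/-- Strict positivity of the Bregman distance away from the base point. -/
private lemma aux_D_pos {h : Rn n → EReal} {h' : Rn n → Rn n}
    (hLeg : LegendreKernel h h') {xs : Rn n} (hxs : xs ∈ interior (edom h))
    {z : Rn n} (hz : z ∈ edom h) (hne : z ≠ xs) : 0 < DrF h h' xs z := by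
  rcases lt_or_ge 0 (DrF h h' xs z) with hpos | hle
  · exact hpos
  exfalso
  have hedomconv : Convex ℝ (edom h) := aux_edom_convex hLeg.convex hLeg.proper.2
  have hb := hLeg.proper.2
  have hxse : xs ∈ edom h := interior_subset hxs
  set hr : Rn n → ℝ := fun x => (h x).toReal with hrdef
  set ι : ℝ := ⟪h' xs, z - xs⟫ with hιdef
  have hDz : hr z - hr xs - ι = DrF h h' xs z := rfl
  have hD0 : DrF h h' xs z = 0 := le_antisymm hle (aux_D_nonneg hLeg hxs hz)
  -- midpoint m in the interior
  set m : Rn n := (1/2 : ℝ) • xs + (1/2 : ℝ) • z with hmdef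
  have hm : m ∈ interior (edom h) :=
    hedomconv.combo_interior_self_mem_interior hxs hz (by norm_num) (by norm_num) (by norm_num)
  have hrm_le : hr m ≤ (1/2) * hr xs + (1/2) * hr z := by
    rw [hmdef]
    have := (aux_hr_convexOn hLeg).2 hxse hz (by norm_num : (0:ℝ) ≤ 1/2)
      (by norm_num : (0:ℝ) ≤ 1/2) (by norm_num)
    simpa [smul_eq_mul, hrdef] using this
  have hmxs : m - xs = (1/2 : ℝ) • (z - xs) := by rw [hmdef]; module
  have hιm : ⟪h' xs, m - xs⟫ = ι / 2 := by
    rw [hmxs, real_inner_smul_right]; rw [hιdef]; ring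
  -- second midpoint
  set m2 : Rn n := (1/2 : ℝ) • xs + (1/2 : ℝ) • m with hm2def
  have hm2 : m2 ∈ interior (edom h) :=
    hedomconv.combo_interior_self_mem_interior hxs (interior_subset hm)
      (by norm_num) (by norm_num) (by norm_num)
  have hm2xs : m2 - xs = (1/4 : ℝ) • (z - xs) := by rw [hm2def, hmdef]; module
  have hιm2 : ⟪h' xs, m2 - xs⟫ = ι / 4 := by
    rw [hm2xs, real_inner_smul_right]; rw [hιdef]; ring
  have hmne : xs ≠ m := by
    intro hcon
    apply hne
    have : m - xs = 0 := by rw [← hcon]; simp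
    rw [hmxs] at this
    have := smul_eq_zero.1 this
    rcases this with h1 | h2
    · norm_num at h1
    · exact sub_eq_zero.1 h2
  -- strict convexity between xs and m
  have hstrict := hLeg.strictConvexOn hxs hm hmne (by norm_num : (0:ℝ) < 1/2)
    (by norm_num : (0:ℝ) < 1/2) (by norm_num)
  have hm2e : m2 ∈ edom h := interior_subset hm2
  have hme : m ∈ edom h := interior_subset hm
  rw [aux_coe_of_edom hb hm2e, aux_coe_of_edom hb hxse, aux_coe_of_edom hb hme,
    ← EReal.coe_mul, ← EReal.coe_mul, ← EReal.coe_add, EReal.coe_lt_coe_iff] at hstrict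
  -- hstrict : hr m2 < 1/2 * hr xs + 1/2 * hr m
  have hDm2 := aux_D_nonneg hLeg hxs hm2e
  simp only [DrF, hιm2] at hDm2
  -- hr m2 ≥ hr xs + ι/4 ; hr m ≤ hr xs + ι/2 (from hrm_le and hr z = hr xs + ι)
  have hz_eq : hr z = hr xs + ι := by
    have : hr z - hr xs - ι = 0 := by rw [hDz, hD0]
    linarith
  rw [hm2def] at hstrict
  linarith [hrm_le, hz_eq]

end Aux

section Aux2
variable {n : ℕ}

/-- Descent inequality (relative smoothness upper bound) on the interior. -/
private lemma aux_descentU {h : Rn n → EReal} {h' : Rn n → Rn n} {f : Rn n → EReal}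
    {f' : Rn n → Rn n} {Lf : ℝ}
    (hLeg : LegendreKernel h h') (hRel : RelSmooth h f Lf)
    (hf' : ∀ x ∈ interior (edom h), HasGradientAt (fun y => (f y).toReal) (f' x) x)
    {xs : Rn n} (hxs : xs ∈ interior (edom h))
    {w : Rn n} (hw : w ∈ interior (edom h)) :
    (f w).toReal ≤ (f xs).toReal + ⟪f' xs, w - xs⟫ + Lf * DrF h h' xs w := by
  obtain ⟨hfprop, hflsc, hdomsub, hconvp, hconvm⟩ := hRel
  have hb := hLeg.proper.2
  have hfb := hfprop.2
  have hedomconv : Convex ℝ (edom h) := aux_edom_convex hLeg.convex hb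
  have hUconv : Convex ℝ (interior (edom h)) := hedomconv.interior
  set ψ : Rn n → ℝ := fun x => Lf * (h x).toReal - (f x).toReal with hψdef
  have hFco : ∀ z ∈ interior (edom h),
      (Lf : EReal) * h z - f z = ((ψ z : ℝ) : EReal) := by
    intro z hz
    have hze : z ∈ edom h := interior_subset hz
    rw [aux_coe_of_edom hb hze, aux_coe_of_edom hfb (hdomsub hze), hψdef]
    norm_cast
  have hψconv : ConvexOn ℝ (interior (edom h)) ψ := by
    refine ⟨hUconv, fun x hx y hy a b ha hb' hab => ?_⟩
    have hm : a • x + b • y ∈ interior (edom h) := hUconv hx hy ha hb' hab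
    have hle := hconvm hx hy ha hb' hab
    simp only at hle
    rw [hFco x hx, hFco y hy, hFco _ hm, ← EReal.coe_mul, ← EReal.coe_mul, ← EReal.coe_add,
      EReal.coe_le_coe_iff] at hle
    simpa [smul_eq_mul] using hle
  have hgh : HasGradientAt (fun y => (h y).toReal) (h' xs) xs := hLeg.differentiable xs hxs
  have hgf : HasGradientAt (fun y => (f y).toReal) (f' xs) xs := hf' xs hxs
  have hgψ : HasGradientAt ψ (Lf • h' xs - f' xs) xs := by
    rw [hasGradientAt_iff_hasFDerivAt]
    have h1 := (hgh.hasFDerivAt.const_smul Lf).sub hgf.hasFDerivAt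
    have heq : (InnerProductSpace.toDual ℝ (Rn n)) (Lf • h' xs - f' xs)
        = Lf • (InnerProductSpace.toDual ℝ (Rn n)) (h' xs)
          - (InnerProductSpace.toDual ℝ (Rn n)) (f' xs) := by
      simp [map_sub, map_smul]
    rw [heq]
    simpa [hψdef, smul_eq_mul, Pi.smul_def, Pi.sub_def] using h1
  have hgi := helper_grad_ineq hψconv hxs hgψ hw
  rw [inner_sub_left, real_inner_smul_left] at hgi
  simp only [hψdef, DrF] at hgi ⊢
  linarith

/-- Descent inequality extended to the whole domain of `h` by a limiting argument. -/
private lemma aux_descent {h : Rn n → EReal} {h' : Rn n → Rn n} {f : Rn n → EReal}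
    {f' : Rn n → Rn n} {Lf : ℝ}
    (hLeg : LegendreKernel h h') (hLf : 0 ≤ Lf) (hRel : RelSmooth h f Lf)
    (hf' : ∀ x ∈ interior (edom h), HasGradientAt (fun y => (f y).toReal) (f' x) x)
    {xs : Rn n} (hxs : xs ∈ interior (edom h))
    {w : Rn n} (hw : w ∈ edom h) :
    (f w).toReal ≤ (f xs).toReal + ⟪f' xs, w - xs⟫ + Lf * DrF h h' xs w := by
  have hb := hLeg.proper.2
  have hfb := hRel.1.2
  have hflsc := hRel.2.1
  have hdomsub := hRel.2.2.1
  have hedomconv : Convex ℝ (edom h) := aux_edom_convex hLeg.convex hb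
  set v := w - xs with hv
  set B : ℝ := (f xs).toReal + ⟪f' xs, v⟫ + Lf * DrF h h' xs w with hBdef
  by_contra hcon
  push_neg at hcon
  -- hcon : B < (f w).toReal
  have hfwB : (B : EReal) < f w := by
    rw [aux_coe_of_edom hfb (hdomsub hw)]
    exact_mod_cast hcon
  obtain ⟨y, hBy, hyf⟩ := EReal.exists_between_coe_real hfwB
  have hevf : ∀ᶠ z in 𝓝 w, (y : EReal) < f z := hflsc w _ hyf
  -- the approximating sequence
  set u : ℕ → Rn n := fun k => w - ((1:ℝ)/(k+1)) • v with hudef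
  have h0 : Tendsto (fun k : ℕ => ((1:ℝ)/(k+1))) atTop (𝓝 0) :=
    tendsto_one_div_add_atTop_nhds_zero_nat
  have hutend : Tendsto u atTop (𝓝 w) := by
    have h1 : Tendsto (fun k : ℕ => ((1:ℝ)/(k+1)) • v) atTop (𝓝 0) := by
      simpa using h0.smul_const v
    simpa [hudef] using tendsto_const_nhds.sub h1
  have humem : ∀ k : ℕ, u k ∈ interior (edom h) := by
    intro k
    have hk : (0:ℝ) < 1/(k+1) := by positivity
    have hk1 : (1:ℝ)/(k+1) ≤ 1 := by
      rw [div_le_one (by positivity)]; linarith [Nat.cast_nonneg (α := ℝ) k]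
    have hmem : ((1:ℝ)/(k+1)) • xs + (1 - 1/((k:ℝ)+1)) • w ∈ interior (edom h) :=
      hedomconv.combo_interior_self_mem_interior (a := (1:ℝ)/(k+1)) (b := 1 - 1/((k:ℝ)+1))
        hxs hw hk (by linarith) (by ring)
    have heq : u k = ((1:ℝ)/(k+1)) • xs + (1 - 1/((k:ℝ)+1)) • w := by
      rw [hudef]; simp only; rw [hv]; module
    rw [heq]; exact hmem
  -- real upper bound along the sequence
  have hub : ∀ k : ℕ, (f (u k)).toReal ≤
      (f xs).toReal + (1 - 1/((k:ℝ)+1)) * ⟪f' xs, v⟫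
        + Lf * ((1 - 1/((k:ℝ)+1)) * DrF h h' xs w) := by
    intro k
    have hdu := aux_descentU hLeg hRel hf' hxs (humem k)
    have hukxs : u k - xs = (1 - 1/((k:ℝ)+1)) • v := by
      rw [hudef]; simp only; rw [hv]; module
    have hinner : ⟪f' xs, u k - xs⟫ = (1 - 1/((k:ℝ)+1)) * ⟪f' xs, v⟫ := by
      rw [hukxs, real_inner_smul_right]
    have hinner2 : ⟪h' xs, u k - xs⟫ = (1 - 1/((k:ℝ)+1)) * ⟪h' xs, v⟫ := by
      rw [hukxs, real_inner_smul_right]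
    -- convexity bound on h along the segment
    have hk : (0:ℝ) < 1/(k+1) := by positivity
    have hk1 : (1:ℝ)/(k+1) ≤ 1 := by
      rw [div_le_one (by positivity)]; linarith [Nat.cast_nonneg (α := ℝ) k]
    have hrconv := (aux_hr_convexOn hLeg).2 (interior_subset hxs) hw
      (le_of_lt hk) (by linarith : (0:ℝ) ≤ 1 - 1/((k:ℝ)+1)) (by ring)
    have heq : u k = ((1:ℝ)/(k+1)) • xs + (1 - 1/((k:ℝ)+1)) • w := by
      rw [hudef]; simp only; rw [hv]; module
    rw [← heq] at hrconv
    simp only [smul_eq_mul] at hrconv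
    have hDu : DrF h h' xs (u k) ≤ (1 - 1/((k:ℝ)+1)) * DrF h h' xs w := by
      simp only [DrF] at *
      rw [hinner2]
      nlinarith [hrconv]
    have := mul_le_mul_of_nonneg_left hDu hLf
    rw [hinner] at hdu
    linarith
  -- limits
  have hRtend : Tendsto (fun k : ℕ => (f xs).toReal + (1 - 1/((k:ℝ)+1)) * ⟪f' xs, v⟫
      + Lf * ((1 - 1/((k:ℝ)+1)) * DrF h h' xs w)) atTop (𝓝 B) := by
    have h1 : Tendsto (fun k : ℕ => (1 - 1/((k:ℝ)+1))) atTop (𝓝 1) := by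
      simpa using tendsto_const_nhds.sub h0
    have := ((tendsto_const_nhds (x := (f xs).toReal)).add
      (h1.mul_const ⟪f' xs, v⟫)).add ((h1.mul_const (DrF h h' xs w)).const_mul Lf)
    simpa [hBdef] using this
  have hevR : ∀ᶠ k : ℕ in atTop, (f xs).toReal + (1 - 1/((k:ℝ)+1)) * ⟪f' xs, v⟫
      + Lf * ((1 - 1/((k:ℝ)+1)) * DrF h h' xs w) < y :=
    hRtend.eventually_lt_const (by exact_mod_cast hBy)
  have hevf2 : ∀ᶠ k in atTop, (y : EReal) < f (u k) := hutend.eventually hevf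
  obtain ⟨k, hk1', hk2'⟩ := (hevR.and hevf2).exists
  have hfuk : f (u k) = (((f (u k)).toReal : ℝ) : EReal) :=
    aux_coe_of_edom hfb (hdomsub (interior_subset (humem k)))
  rw [hfuk, EReal.coe_lt_coe_iff] at hk2'
  linarith [hub k]

end Aux2

section Aux3
variable {n : ℕ}

/-- Uniform positive gap of the Bregman distance outside a ball. -/
private lemma aux_delta {h : Rn n → EReal} {h' : Rn n → Rn n}
    (hLeg : LegendreKernel h h') {xs : Rn n} (hxs : xs ∈ interior (edom h))
    {r : ℝ} (hr0 : 0 < r) :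
    ∃ δ : ℝ, 0 < δ ∧ ∀ w ∈ edom h, r ≤ ‖w - xs‖ → δ ≤ DrF h h' xs w := by
  by_contra hcon
  push_neg at hcon
  choose wseq hw1 hw2 hw3 using fun k : ℕ => hcon (1/(k+1)) (by positivity)
  have hb := hLeg.proper.2
  obtain ⟨R, hR⟩ := hLeg.coercive (‖h' xs‖ + 1)
  set C0 : ℝ := (h xs).toReal + ‖h' xs‖ * ‖xs‖ + 1 with hC0
  have hDk1 : ∀ k : ℕ, DrF h h' xs (wseq k) < 1 := by
    intro k
    refine lt_of_lt_of_le (hw3 k) ?_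
    rw [div_le_one (by positivity)]
    linarith [Nat.cast_nonneg (α := ℝ) k]
  have hbound : ∀ k, ‖wseq k‖ ≤ max R (C0 + 1) := by
    intro k
    by_contra hgt
    push_neg at hgt
    have h1 : R ≤ ‖wseq k‖ := le_trans (le_max_left _ _) hgt.le
    have h2 := hR (wseq k) h1
    rw [aux_coe_of_edom hb (hw1 k), EReal.coe_le_coe_iff] at h2
    have h3 : ⟪h' xs, wseq k - xs⟫ ≤ ‖h' xs‖ * (‖wseq k‖ + ‖xs‖) := by
      calc ⟪h' xs, wseq k - xs⟫ ≤ ‖h' xs‖ * ‖wseq k - xs‖ := real_inner_le_norm _ _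
        _ ≤ ‖h' xs‖ * (‖wseq k‖ + ‖xs‖) :=
          mul_le_mul_of_nonneg_left (norm_sub_le _ _) (norm_nonneg _)
    have h4 : C0 + 1 < ‖wseq k‖ := lt_of_le_of_lt (le_max_right _ _) hgt
    have h5 := hDk1 k
    simp only [DrF] at h5
    nlinarith [h5, h2, h3, h4]
  obtain ⟨wbar, hwbar_mem, φk, hφmono, hφtend⟩ :=
    (isCompact_closedBall (0 : Rn n) (max R (C0+1))).tendsto_subseq
      (fun k => mem_closedBall_zero_iff.2 (hbound k))
  have hwne : r ≤ ‖wbar - xs‖ := by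
    have hcont : Tendsto (fun j => ‖wseq (φk j) - xs‖) atTop (𝓝 ‖wbar - xs‖) :=
      (hφtend.sub tendsto_const_nhds).norm
    exact ge_of_tendsto' hcont (fun j => hw2 (φk j))
  have hwbarne : wbar ≠ xs := by
    intro hcon2
    rw [hcon2, sub_self, norm_zero] at hwne
    linarith
  set Bb : ℝ := (h xs).toReal + ⟪h' xs, wbar - xs⟫ with hBb
  have hwb : h wbar ≤ (Bb : EReal) := by
    by_contra hlt
    push_neg at hlt
    obtain ⟨y, h1y, h2y⟩ := EReal.exists_between_coe_real hlt
    have hev := hLeg.lsc wbar _ h2y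
    have hev2 : ∀ᶠ j : ℕ in atTop, (y : EReal) < h (wseq (φk j)) := hφtend.eventually hev
    have hkj : ∀ j : ℕ, (h (wseq (φk j))).toReal
        < 1/((φk j : ℝ)+1) + (h xs).toReal + ⟪h' xs, wseq (φk j) - xs⟫ := by
      intro j
      have := hw3 (φk j)
      simp only [DrF] at this
      linarith
    have htk : Tendsto (fun j : ℕ => 1/((φk j : ℝ)+1) + (h xs).toReal
        + ⟪h' xs, wseq (φk j) - xs⟫) atTop (𝓝 (0 + (h xs).toReal + ⟪h' xs, wbar - xs⟫)) := by
      refine Tendsto.add (Tendsto.add ?_ tendsto_const_nhds) ?_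
      · have hle : ∀ j : ℕ, (1:ℝ)/((φk j:ℝ)+1) ≤ 1/((j:ℝ)+1) := by
          intro j
          apply one_div_le_one_div_of_le (by positivity)
          have hj : (j : ℝ) ≤ (φk j : ℝ) := by exact_mod_cast hφmono.le_apply
          linarith
        exact squeeze_zero (fun j => by positivity) hle
          tendsto_one_div_add_atTop_nhds_zero_nat
      · exact Filter.Tendsto.inner tendsto_const_nhds (hφtend.sub tendsto_const_nhds)
    have hBby : Bb < y := by exact_mod_cast h1y
    have hevlt : ∀ᶠ j : ℕ in atTop, 1/((φk j : ℝ)+1) + (h xs).toReal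
        + ⟪h' xs, wseq (φk j) - xs⟫ < y :=
      htk.eventually_lt_const (by rw [hBb] at hBby; linarith)
    obtain ⟨j, hj1, hj2⟩ := (hevlt.and hev2).exists
    have : h (wseq (φk j)) = (((h (wseq (φk j))).toReal : ℝ) : EReal) :=
      aux_coe_of_edom hb (hw1 (φk j))
    rw [this, EReal.coe_lt_coe_iff] at hj2
    linarith [hkj j]
  have hwbardom : wbar ∈ edom h := lt_of_le_of_lt hwb (EReal.coe_lt_top _)
  have hDwb : DrF h h' xs wbar ≤ 0 := by
    rw [aux_coe_of_edom hb hwbardom, EReal.coe_le_coe_iff] at hwb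
    simp only [DrF]
    rw [hBb] at hwb
    linarith
  exact absurd hDwb (not_le.2 (aux_D_pos hLeg hxs hwbardom hwbarne))

end Aux3

end AuxSec

-- STATEMENT 14
theorem stmt14_localmin_nondegenerate_fb_fixed_point
    {n : ℕ} (h : Rn n → EReal) (h' : Rn n → Rn n) (f : Rn n → EReal) (f' : Rn n → Rn n)
    (g : Rn n → EReal) (Lf : ℝ)
    (hLeg : LegendreKernel h h') (hLf : 0 ≤ Lf) (hRel : RelSmooth h f Lf)
    (hf' : ∀ x ∈ interior (edom h), HasGradientAt (fun y => (f y).toReal) (f' x) x)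
    (hg : ERealProper g) (hglsc : LowerSemicontinuous g)
    (hmin : ∃ xm ∈ closure (interior (edom h)),
      ∀ y ∈ closure (interior (edom h)), f xm + g xm ≤ f y + g y)
    (hrange : ∀ γ : ℝ, 0 < γ → γ * Lf < 1 →
      ∀ x ∈ interior (edom h), fbT h h' f f' g γ x ⊆ interior (edom h))
    (xs : Rn n) (hxs : xs ∈ interior (edom h)) (hxdom : f xs + g xs ≠ ⊤)
    (hlocmin : ∀ᶠ y in 𝓝 xs, f xs + g xs ≤ f y + g y) :
    ∃ γ₀ : ℝ, 0 < γ₀ ∧ γ₀ * Lf ≤ 1 ∧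
      ∀ γ : ℝ, 0 < γ → γ < γ₀ → fbT h h' f f' g γ xs = {xs} := by
  classical
  have hhb : ∀ x, h x ≠ ⊥ := hLeg.proper.2
  have hfb : ∀ x, f x ≠ ⊥ := hRel.1.2
  have hgb : ∀ x, g x ≠ ⊥ := hg.2
  have hdomsub : edom h ⊆ edom f := hRel.2.2.1
  have hedomconv : Convex ℝ (edom h) := aux_edom_convex hLeg.convex hhb
  have hxse : xs ∈ edom h := interior_subset hxs
  obtain ⟨r, hr0, hballP⟩ := Metric.eventually_nhds_iff.1 hlocmin
  obtain ⟨δ, hδ0, hδ⟩ := aux_delta hLeg hxs hr0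
  have hgxs_ne_top : g xs ≠ ⊤ := by
    intro hgt
    apply hxdom
    rw [hgt]
    exact EReal.add_top_of_ne_bot (hfb xs)
  obtain ⟨p, hpdef⟩ : ∃ p : ℝ, p = (f xs).toReal + (g xs).toReal :=
    ⟨_, rfl⟩
  have hgxsco : g xs = (((g xs).toReal : ℝ) : EReal) :=
    (EReal.coe_toReal hgxs_ne_top (hgb xs)).symm
  have hfxsco : f xs = (((f xs).toReal : ℝ) : EReal) := aux_coe_of_edom hfb (hdomsub hxse)
  have hφxs : f xs + g xs = (p : EReal) := by
    conv_lhs => rw [hfxsco, hgxsco]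
    rw [hpdef]
    norm_cast
  obtain ⟨xm, hxmcl, hxmmin⟩ := hmin
  have hφxm_le : f xm + g xm ≤ (p : EReal) := by
    rw [← hφxs]
    exact hxmmin xs (subset_closure hxs)
  have hφxm_ne_bot : f xm + g xm ≠ ⊥ := by
    intro hc
    rcases EReal.add_eq_bot_iff.1 hc with h1 | h1
    exacts [hfb xm h1, hgb xm h1]
  have hφxm_ne_top : f xm + g xm ≠ ⊤ := by
    intro hc
    rw [hc] at hφxm_le
    exact absurd (lt_of_le_of_lt hφxm_le (EReal.coe_lt_top p)) (lt_irrefl _)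
  obtain ⟨q, hqdef⟩ : ∃ q : ℝ, q = (f xm + g xm).toReal := ⟨_, rfl⟩
  have hφxm : f xm + g xm = (q : EReal) := by
    rw [hqdef]; exact (EReal.coe_toReal hφxm_ne_top hφxm_ne_bot).symm
  have hqp : q ≤ p := by
    rw [hφxm] at hφxm_le
    exact_mod_cast hφxm_le
  obtain ⟨γ₀, hγ₀def⟩ : ∃ x : ℝ, x = δ / (Lf * δ + (p - q) + δ) := ⟨_, rfl⟩
  have hden : 0 < Lf * δ + (p - q) + δ := by nlinarith [mul_nonneg hLf hδ0.le]
  refine ⟨γ₀, hγ₀def ▸ div_pos hδ0 hden, ?_, ?_⟩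
  · rw [hγ₀def, div_mul_eq_mul_div, div_le_one hden]
    nlinarith
  intro γ hγ hγγ₀
  obtain ⟨c, hcdef⟩ : ∃ c : ℝ, c = 1/γ - Lf := ⟨_, rfl⟩
  have hcδ : (p - q) + δ < c * δ := by
    have h1 : 1/γ₀ < 1/γ := one_div_lt_one_div_of_lt hγ hγγ₀
    rw [hγ₀def, one_div_div] at h1
    have h2 := (div_lt_iff₀ hδ0).1 h1
    rw [hcdef]
    nlinarith
  have hc1 : 1 ≤ c := by nlinarith
  have hγpos : (0:ℝ) < 1/γ := by positivity
  -- Bregman distance formulas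
  have hDco : ∀ z ∈ edom h, Dbreg h h' z xs = ((DrF h h' xs z : ℝ) : EReal) := by
    intro z hz
    have h1 : Dbreg h h' z xs
        = (((h z).toReal - (h xs).toReal - ⟪h' xs, z - xs⟫ : ℝ) : EReal) := by
      simp only [Dbreg, if_pos hxs]
      conv_lhs => rw [aux_coe_of_edom hhb hz, aux_coe_of_edom hhb hxse]
      norm_cast
    exact h1
  have hDtop : ∀ z, z ∉ edom h → Dbreg h h' z xs = ⊤ := by
    intro z hz
    have hz' : h z = ⊤ := not_not.1 (fun hne => hz (lt_top_iff_ne_top.2 hne))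
    simp only [Dbreg, if_pos hxs, hz']
    conv_lhs => rw [aux_coe_of_edom hhb hxse]
    rw [EReal.top_sub_coe, EReal.top_sub_coe]
  -- fbObj formulas
  have hEtop1 : ∀ z, z ∉ edom h → fbObj h h' f f' g γ xs z = ⊤ := by
    intro z hz
    simp only [fbObj, hDtop z hz]
    rw [EReal.mul_top_of_pos (by exact_mod_cast hγpos : (0:EReal) < ((1/γ : ℝ) : EReal))]
    apply EReal.add_top_of_ne_bot
    simp [EReal.add_eq_bot_iff, hfb xs, hgb z]
  have hEtop2 : ∀ z ∈ edom h, g z = ⊤ → fbObj h h' f f' g γ xs z = ⊤ := by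
    intro z hz hgz
    simp only [fbObj, hDco z hz, hgz]
    conv_lhs => rw [hfxsco]
    rw [← EReal.coe_mul,
      (by norm_cast : (((f xs).toReal : ℝ) : EReal) + ((⟪f' xs, z - xs⟫ : ℝ) : EReal)
        = (((f xs).toReal + ⟪f' xs, z - xs⟫ : ℝ) : EReal)),
      EReal.coe_add_top, EReal.top_add_coe]
  have hEco : ∀ z ∈ edom h, g z ≠ ⊤ → fbObj h h' f f' g γ xs z
      = (((f xs).toReal + ⟪f' xs, z - xs⟫ + (g z).toReal
          + (1/γ) * DrF h h' xs z : ℝ) : EReal) := by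
    intro z hz hgz
    simp only [fbObj, hDco z hz]
    conv_lhs => rw [hfxsco,
      (EReal.coe_toReal hgz (hgb z)).symm]
    norm_cast
  have hExs : fbObj h h' f f' g γ xs xs = (p : EReal) := by
    rw [hEco xs hxse hgxs_ne_top]
    have : (f xs).toReal + ⟪f' xs, xs - xs⟫ + (g xs).toReal
        + (1/γ) * DrF h h' xs xs = p := by
      simp [DrF, hpdef]
    exact_mod_cast this
  -- key strict inequality
  have hkey : ∀ w ∈ edom h, g w ≠ ⊤ → w ≠ xs →
      p < (f xs).toReal + ⟪f' xs, w - xs⟫ + (g w).toReal + (1/γ) * DrF h h' xs w := by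
    intro w hw hgw hne
    have hdes := aux_descent hLeg hLf hRel hf' hxs hw
    have hgwco : g w = (((g w).toReal : ℝ) : EReal) := (EReal.coe_toReal hgw (hgb w)).symm
    have hsplit : (1/γ) * DrF h h' xs w = Lf * DrF h h' xs w + c * DrF h h' xs w := by
      rw [hcdef]; ring
    rcases lt_or_ge ‖w - xs‖ r with hnear | hfar
    · have hDpos := aux_D_pos hLeg hxs hw hne
      have hloc := hballP (show dist w xs < r by rw [dist_eq_norm]; exact hnear)
      rw [hφxs] at hloc
      conv_rhs at hloc => rw [aux_coe_of_edom hfb (hdomsub hw), hgwco]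
      rw [← EReal.coe_add, EReal.coe_le_coe_iff] at hloc
      have hcD : 0 < c * DrF h h' xs w := mul_pos (lt_of_lt_of_le zero_lt_one hc1) hDpos
      linarith [hsplit]
    · have hDδ := hδ w hw hfar
      have hq2 : q ≤ (f w).toReal + (g w).toReal := by
        have hm2 := hxmmin w (helper_mem_closure_interior hedomconv hxs hw)
        rw [hφxm] at hm2
        conv_rhs at hm2 => rw [aux_coe_of_edom hfb (hdomsub hw), hgwco]
        rw [← EReal.coe_add, EReal.coe_le_coe_iff] at hm2
        exact hm2
      have hcmul : c * δ ≤ c * DrF h h' xs w :=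
        mul_le_mul_of_nonneg_left hDδ (by linarith : (0:ℝ) ≤ c)
      linarith [hsplit]
  have hmain : ∀ w, (p : EReal) ≤ fbObj h h' f f' g γ xs w := by
    intro w
    by_cases hw : w ∈ edom h
    · by_cases hgw : g w = ⊤
      · rw [hEtop2 w hw hgw]; exact le_top
      · rw [hEco w hw hgw, EReal.coe_le_coe_iff]
        by_cases hne : w = xs
        · subst hne
          simp [DrF, hpdef]
        · exact (hkey w hw hgw hne).le
    · rw [hEtop1 w hw]; exact le_top
  refine Set.eq_singleton_iff_unique_mem.2 ⟨?_, ?_⟩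
  · intro w
    rw [hExs]
    exact hmain w
  · intro z hz
    have hle := hz xs
    rw [hExs] at hle
    by_cases hw : z ∈ edom h
    · by_cases hgw : g z = ⊤
      · rw [hEtop2 z hw hgw] at hle
        exact absurd (lt_of_le_of_lt hle (EReal.coe_lt_top p)) (lt_irrefl _)
      · by_contra hne
        have hk := hkey z hw hgw hne
        rw [hEco z hw hgw, EReal.coe_le_coe_iff] at hle
        linarith
    · rw [hEtop1 z hw] at hle
      exact absurd (lt_of_le_of_lt hle (EReal.coe_lt_top p)) (lt_irrefl _)
end

section
/- Under the standing assumptions, let γ ∈ (0, 1/L_f) and σ ∈ (0, (1 − γL_f)/γ). Then for every x ∈ C, every x̄ ∈ T_γ(x) with x̄ ≠ x, and every d ∈ ℝⁿ, there exists τ̄ ∈ (0, 1] such that for all τ ∈ [0, τ̄], the point x_τ := (1 − τ)x̄ + τ(x + d) lies in C and satisfies φ_γ(x_τ) ≤ φ_γ(x) − σ·D_h(x̄, x). -/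
open Filter Topology Set Bornology
open scoped RealInnerProductSpace

section helperlemmas
open Filter Topology Set
open scoped RealInnerProductSpace
variable {n : ℕ}

/-- Gradient inequality for a convex function at a point where it has a gradient. -/
lemma inner_grad_ineq {s : Set (Rn n)} {φ : Rn n → ℝ} (hφ : ConvexOn ℝ s φ)
    {y z : Rn n} (hy : y ∈ s) (hz : z ∈ s) {v : Rn n} (hv : HasGradientAt φ v y) :
    φ y + ⟪v, z - y⟫ ≤ φ z := by
  set g : ℝ → ℝ := fun t => φ (y + t • (z - y)) with hgdef
  have hder : HasDerivAt g ⟪v, z - y⟫ 0 := by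
    have h1 : HasDerivAt (fun t : ℝ => y + t • (z - y)) (z - y) 0 := by
      simpa using ((hasDerivAt_id (0:ℝ)).smul_const (z - y)).const_add y
    have h2 : HasFDerivAt φ (InnerProductSpace.toDual ℝ _ v) y := hv.hasFDerivAt
    have h2' : HasFDerivAt φ (InnerProductSpace.toDual ℝ _ v) (y + (0:ℝ) • (z - y)) := by
      simpa using h2
    have := h2'.comp_hasDerivAt (0:ℝ) h1
    simp only [InnerProductSpace.toDual_apply_apply] at this
    exact this
  have hslope : Tendsto (fun t => (g t - g 0) / t) (𝓝[>] 0) (𝓝 ⟪v, z - y⟫) := by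
    have := hasDerivAt_iff_tendsto_slope.mp hder
    have := this.mono_left (nhdsWithin_mono 0 (fun t ht => by
      simp only [mem_compl_iff, mem_singleton_iff]; exact ne_of_gt ht))
    refine this.congr' ?_
    filter_upwards [self_mem_nhdsWithin] with t ht
    simp [slope_def_field]
  have hle : ⟪v, z - y⟫ ≤ g 1 - g 0 := by
    refine le_of_tendsto hslope ?_
    filter_upwards [Ioc_mem_nhdsGT_of_mem (Set.left_mem_Ico.mpr one_pos)] with t ht
    have hcomb : g t ≤ (1 - t) * g 0 + t * g 1 := by
      have hmem := hφ.2 hy hz (by linarith [ht.2] : (0:ℝ) ≤ 1 - t) (le_of_lt ht.1) (by ring)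
      have heq : (1 - t) • y + t • z = y + t • (z - y) := by module
      have h0 : y + (0:ℝ) • (z - y) = y := by simp
      have h1 : y + (1:ℝ) • (z - y) = z := by module
      simp only [hgdef, h0, h1]
      rw [← heq]
      simpa [smul_eq_mul] using hmem
    have h0 : g 0 = φ y := by simp [hgdef]
    rw [div_le_iff₀ ht.1]
    nlinarith [ht.1.le]
  have h0 : g 0 = φ y := by simp [hgdef]
  have h1 : g 1 = φ z := by
    have : y + (1:ℝ) • (z - y) = z := by module
    simp [hgdef, this]
  linarith

/-- Transfer convexity from an `EReal`-valued function to a real function agreeing with it. -/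
lemma erealConvexOn_real {s : Set (Rn n)} (hs : Convex ℝ s) {φ : Rn n → EReal} {φR : Rn n → ℝ}
    (hc : ERealConvexOn s φ) (hagree : ∀ y ∈ s, φ y = ((φR y : ℝ) : EReal)) :
    ConvexOn ℝ s φR := by
  refine ⟨hs, fun p hp q hq a b ha hb hab => ?_⟩
  have hmem : a • p + b • q ∈ s := hs hp hq ha hb hab
  have h1 := hc hp hq ha hb hab
  rw [hagree _ hp, hagree _ hq, hagree _ hmem] at h1
  rw [← EReal.coe_mul, ← EReal.coe_mul, ← EReal.coe_add] at h1
  simpa [smul_eq_mul] using EReal.coe_le_coe_iff.mp h1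

/-- Choice of a step bound from a neighbourhood of `0`. -/
lemma exists_taubar {S : Set ℝ} (hS : S ∈ 𝓝 (0:ℝ)) :
    ∃ τ : ℝ, 0 < τ ∧ τ ≤ 1 ∧ ∀ t, 0 ≤ t → t ≤ τ → t ∈ S := by
  obtain ⟨ε, hε, hball⟩ := Metric.mem_nhds_iff.mp hS
  refine ⟨min (ε/2) 1, by positivity, min_le_right _ _, fun t ht0 ht1 => ?_⟩
  apply hball
  rw [Metric.mem_ball, Real.dist_eq, sub_zero, abs_of_nonneg ht0]
  calc t ≤ min (ε/2) 1 := ht1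
    _ ≤ ε/2 := min_le_left _ _
    _ < ε := by linarith

end helperlemmas

-- STATEMENT 15
set_option maxHeartbeats 1600000 in
theorem stmt15_linesearch_well_defined
    {n : ℕ} (h : Rn n → EReal) (h' : Rn n → Rn n) (f : Rn n → EReal) (f' : Rn n → Rn n)
    (g : Rn n → EReal) (Lf γ σ : ℝ)
    (hLeg : LegendreKernel h h') (hLf : 0 ≤ Lf) (hRel : RelSmooth h f Lf)
    (hf' : ∀ x ∈ interior (edom h), HasGradientAt (fun y => (f y).toReal) (f' x) x)
    (hg : ERealProper g) (hglsc : LowerSemicontinuous g)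
    (hmin : ∃ xm ∈ closure (interior (edom h)),
      ∀ y ∈ closure (interior (edom h)), f xm + g xm ≤ f y + g y)
    (hγ : 0 < γ) (hγL : γ * Lf < 1)
    (hrange : ∀ x ∈ interior (edom h), fbT h h' f f' g γ x ⊆ interior (edom h))
    (hσ : 0 < σ) (hσlt : σ < (1 - γ * Lf) / γ)
    (x : Rn n) (hx : x ∈ interior (edom h))
    (xb : Rn n) (hxb : xb ∈ fbT h h' f f' g γ x) (hne : xb ≠ x) (d : Rn n) :
    ∃ τbar : ℝ, 0 < τbar ∧ τbar ≤ 1 ∧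
      ∀ τ : ℝ, 0 ≤ τ → τ ≤ τbar →
        (1 - τ) • xb + τ • (x + d) ∈ interior (edom h) ∧
        fbEnv h h' f f' g γ ((1 - τ) • xb + τ • (x + d))
          ≤ fbEnv h h' f f' g γ x - ((σ : ℝ) : EReal) * Dbreg h h' xb x := by
  classical
  set C := interior (edom h) with hCdef
  have hCo : IsOpen C := isOpen_interior
  have hxbC : xb ∈ C := hrange x hx hxb
  -- convexity of C
  have hedom : Convex ℝ (edom h) := by
    intro p hp q hq a b ha hb hab
    by_cases ha0 : a = 0
    · have hb1 : b = 1 := by linarith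
      simpa [ha0, hb1] using hq
    by_cases hb0 : b = 0
    · have ha1 : a = 1 := by linarith
      simpa [hb0, ha1] using hp
    have key := hLeg.convex (Set.mem_univ p) (Set.mem_univ q) ha hb hab
    have hp' : h p = (((h p).toReal : ℝ) : EReal) :=
      (EReal.coe_toReal (ne_of_lt hp) (hLeg.proper.2 p)).symm
    have hq' : h q = (((h q).toReal : ℝ) : EReal) :=
      (EReal.coe_toReal (ne_of_lt hq) (hLeg.proper.2 q)).symm
    rw [hp', hq'] at key
    rw [← EReal.coe_mul, ← EReal.coe_mul, ← EReal.coe_add] at key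
    exact lt_of_le_of_lt key (EReal.coe_lt_top _)
  have hCc : Convex ℝ C := hedom.interior
  -- real values
  set H : Rn n → ℝ := fun y => (h y).toReal with hHdef
  set F : Rn n → ℝ := fun y => (f y).toReal with hFdef
  have hval : ∀ y ∈ C, h y = ((H y : ℝ) : EReal) := by
    intro y hy
    have h0 : y ∈ edom h := interior_subset hy
    have h1 : h y < ⊤ := h0
    exact (EReal.coe_toReal (ne_of_lt h1) (hLeg.proper.2 y)).symm
  have hfval : ∀ y ∈ C, f y = ((F y : ℝ) : EReal) := by
    intro y hy
    have h0 : y ∈ edom f := hRel.2.2.1 (interior_subset hy)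
    have h1 : f y < ⊤ := h0
    exact (EReal.coe_toReal (ne_of_lt h1) (hRel.1.2 y)).symm
  -- convexity of H on C
  have hHconv : ConvexOn ℝ C H := by
    refine erealConvexOn_real hCc (fun p hp q hq a b ha hb hab => ?_) hval
    exact hLeg.convex (Set.mem_univ p) (Set.mem_univ q) ha hb hab
  -- the real Bregman distance
  set D : ℝ := H xb - H x - ⟪h' x, xb - x⟫ with hDdef
  have hDbreg : Dbreg h h' xb x = ((D : ℝ) : EReal) := by
    rw [Dbreg, if_pos hx, hval xb hxbC, hval x hx]
    rw [← EReal.coe_sub, ← EReal.coe_sub]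
  -- D > 0 by strict convexity
  have hDpos : 0 < D := by
    set m : Rn n := (1/2 : ℝ) • x + (1/2 : ℝ) • xb with hmdef
    have hmC : m ∈ C := hCc hx hxbC (by norm_num) (by norm_num) (by norm_num)
    have hstrict := hLeg.strictConvexOn hx hxbC (Ne.symm hne)
      (by norm_num : (0:ℝ) < 1/2) (by norm_num : (0:ℝ) < 1/2) (by norm_num)
    rw [hval _ hmC, hval _ hx, hval _ hxbC, ← EReal.coe_mul, ← EReal.coe_mul,
      ← EReal.coe_add] at hstrict
    have hstrictR : H m < 1/2 * H x + 1/2 * H xb := EReal.coe_lt_coe_iff.mp hstrict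
    have hgrad := inner_grad_ineq hHconv hx hmC (hLeg.differentiable x hx)
    have hmx : m - x = (1/2 : ℝ) • (xb - x) := by rw [hmdef]; module
    rw [hmx, real_inner_smul_right] at hgrad
    linarith
  -- gradient inequality for Q = Lf*H - F : descent inequality
  have hQgrad : ∀ y ∈ C, HasGradientAt (fun w => Lf * H w - F w) (Lf • h' y - f' y) y := by
    intro y hy
    rw [hasGradientAt_iff_hasFDerivAt]
    have := (((hLeg.differentiable y hy).hasFDerivAt.const_mul Lf).sub
      (hf' y hy).hasFDerivAt)
    refine this.congr_fderiv ?_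
    ext w
    simp [inner_sub_left, real_inner_smul_left]
  have hQconv : ConvexOn ℝ C (fun w => Lf * H w - F w) := by
    refine erealConvexOn_real hCc hRel.2.2.2.2 (fun y hy => ?_)
    rw [hval y hy, hfval y hy, ← EReal.coe_mul, ← EReal.coe_sub]
  have hdesc : F xb ≤ F x + ⟪f' x, xb - x⟫ + Lf * D := by
    have := inner_grad_ineq hQconv hx hxbC (hQgrad x hx)
    rw [inner_sub_left, real_inner_smul_left] at this
    simp only [hDdef]
    linarith
  -- the path
  set p : ℝ → Rn n := fun τ => (1 - τ) • xb + τ • (x + d) with hpdef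
  have hpc : Continuous p := by
    exact ((continuous_const.sub continuous_id).smul continuous_const).add
      (continuous_id.smul continuous_const)
  have hp0 : p 0 = xb := by simp [hpdef]
  have htp : Tendsto p (𝓝 0) (𝓝 xb) := by
    have := hpc.tendsto 0
    rwa [hp0] at this
  have hE1 : ∀ᶠ τ in 𝓝 (0:ℝ), p τ ∈ C := htp.eventually (hCo.eventually_mem hxbC)
  -- lower bound on the envelope at x
  have hkey : fbObj h h' f f' g γ x xb ≤ fbEnv h h' f f' g γ x := le_iInf (fun w => hxb w)
  -- the objective value formula
  have hobj : ∀ y ∈ C, fbObj h h' f f' g γ y xb =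
      ((F y + ⟪f' y, xb - y⟫ : ℝ) : EReal) + g xb
        + ((1/γ * (H xb - H y - ⟪h' y, xb - y⟫) : ℝ) : EReal) := by
    intro y hy
    rw [fbObj, Dbreg, if_pos hy, hval xb hxbC, hval y hy, hfval y hy]
    rw [← EReal.coe_sub, ← EReal.coe_sub, ← EReal.coe_mul, ← EReal.coe_add]
  -- case on g xb
  have hgne : g xb ≠ ⊥ := hg.2 xb
  rcases eq_or_ne (g xb) ⊤ with hgtop | hgfin
  · -- top case: envelope at x is ⊤, inequality trivial
    have hobjx : fbObj h h' f f' g γ x xb = ⊤ := by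
      rw [hobj x hx, hgtop, EReal.coe_add_top, EReal.top_add_coe]
    have hEnvTop : fbEnv h h' f f' g γ x = ⊤ := top_le_iff.mp (hobjx ▸ hkey)
    obtain ⟨τbar, hτ0, hτ1, hτS⟩ := exists_taubar hE1
    refine ⟨τbar, hτ0, hτ1, fun τ hτa hτb => ?_⟩
    refine ⟨hτS τ hτa hτb, ?_⟩
    rw [hEnvTop, hDbreg, ← EReal.coe_mul, EReal.top_sub_coe]
    exact le_top
  · -- main case
    obtain ⟨G, hG⟩ : ∃ G : ℝ, g xb = ((G : ℝ) : EReal) := by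
      refine ⟨(g xb).toReal, (EReal.coe_toReal hgfin hgne).symm⟩
    -- bound for the gradient of f near xb
    obtain ⟨K, hf'bound⟩ : ∃ K : ℝ, ∀ᶠ τ in 𝓝 (0:ℝ), ‖f' (p τ)‖ ≤ K := by
      obtain ⟨ε₀, hε₀, hball₀⟩ := Metric.isOpen_iff.mp hCo xb hxbC
      have hh'c : ContinuousAt h' xb := hLeg.gradContinuous.continuousAt (hCo.mem_nhds hxbC)
      have hev : ∀ᶠ y in 𝓝 xb, ‖h' y‖ < ‖h' xb‖ + 1 :=
        (hh'c.norm.tendsto).eventually_lt_const (lt_add_one _)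
      obtain ⟨ε₁, hε₁, hball₁⟩ := Metric.eventually_nhds_iff.mp hev
      set r : ℝ := min ε₀ ε₁ / 3 with hrdef
      have hr : 0 < r := by positivity
      have cb2 : Metric.closedBall xb (2*r) ⊆ C := by
        intro y hy
        apply hball₀
        rw [Metric.mem_ball]
        have h1 : dist y xb ≤ 2*r := Metric.mem_closedBall.mp hy
        have h2 : min ε₀ ε₁ ≤ ε₀ := min_le_left _ _
        calc dist y xb ≤ 2*r := h1
          _ < ε₀ := by rw [hrdef]; linarith
      have cb1 : Metric.closedBall xb r ⊆ Metric.closedBall xb (2*r) :=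
        Metric.closedBall_subset_closedBall (by linarith)
      have hQcont : ContinuousOn (fun w => Lf * H w - F w) (Metric.closedBall xb (2*r)) := by
        intro y hy
        have hyC : y ∈ C := cb2 hy
        exact ((continuousAt_const.mul (hLeg.differentiable y hyC).continuousAt).sub
          (hf' y hyC).continuousAt).continuousWithinAt
      obtain ⟨M, hM⟩ := (isCompact_closedBall xb (2*r)).exists_bound_of_continuousOn hQcont
      have hM0 : 0 ≤ M :=
        le_trans (norm_nonneg _) (hM xb (Metric.mem_closedBall_self (by linarith)))
      have hvb : ∀ y ∈ Metric.closedBall xb r, ‖Lf • h' y - f' y‖ ≤ 2*M/r := by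
        intro y hy
        set v : Rn n := Lf • h' y - f' y with hvdef
        by_cases hv0 : v = 0
        · rw [hv0]; simp; positivity
        have hvn : 0 < ‖v‖ := norm_pos_iff.mpr hv0
        set z : Rn n := y + (r / ‖v‖) • v with hzdef
        have hzy : ‖z - y‖ = r := by
          rw [hzdef]
          simp only [add_sub_cancel_left]
          rw [norm_smul, Real.norm_eq_abs, abs_of_pos (by positivity)]
          field_simp
        have hz : z ∈ Metric.closedBall xb (2*r) := by
          rw [Metric.mem_closedBall]
          calc dist z xb ≤ dist z y + dist y xb := dist_triangle _ _ _
            _ ≤ r + r := by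
                rw [dist_eq_norm, hzy]
                exact add_le_add_right (Metric.mem_closedBall.mp hy) r
            _ = 2*r := by ring
        have hyC : y ∈ C := cb2 (cb1 hy)
        have hzC : z ∈ C := cb2 hz
        have hgi := inner_grad_ineq hQconv hyC hzC (hQgrad y hyC)
        have hinner : ⟪v, z - y⟫ = r * ‖v‖ := by
          rw [hzdef]
          simp only [add_sub_cancel_left]
          rw [real_inner_smul_right, real_inner_self_eq_norm_sq]
          field_simp
        have hQy := hM y (cb1 hy)
        have hQz := hM z hz
        rw [Real.norm_eq_abs] at hQy hQz
        rw [hinner] at hgi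
        rw [le_div_iff₀ hr]
        have h1 := abs_le.mp hQy
        have h2 := abs_le.mp hQz
        nlinarith
      refine ⟨Lf * (‖h' xb‖ + 1) + 2*M/r, ?_⟩
      filter_upwards [htp.eventually (Metric.closedBall_mem_nhds xb hr)] with τ hmem
      have hnh' : ‖h' (p τ)‖ ≤ ‖h' xb‖ + 1 := by
        refine le_of_lt (hball₁ ?_)
        have h1 : dist (p τ) xb ≤ r := Metric.mem_closedBall.mp hmem
        have h2 : min ε₀ ε₁ ≤ ε₁ := min_le_right _ _
        rw [hrdef] at h1
        linarith
      have hdecomp : f' (p τ) = Lf • h' (p τ) - (Lf • h' (p τ) - f' (p τ)) := by module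
      calc ‖f' (p τ)‖ = ‖Lf • h' (p τ) - (Lf • h' (p τ) - f' (p τ))‖ := by rw [← hdecomp]
        _ ≤ ‖Lf • h' (p τ)‖ + ‖Lf • h' (p τ) - f' (p τ)‖ := norm_sub_le _ _
        _ ≤ Lf * (‖h' xb‖ + 1) + 2*M/r := by
            refine add_le_add ?_ (hvb _ hmem)
            rw [norm_smul, Real.norm_eq_abs, abs_of_nonneg hLf]
            exact mul_le_mul_of_nonneg_left hnh' hLf
    set r0 : ℝ := F x + ⟪f' x, xb - x⟫ + G + 1/γ * D with hr0def
    set ψ : ℝ → ℝ := fun τ => F (p τ) + ⟪f' (p τ), xb - p τ⟫ + G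
      + 1/γ * (H xb - H (p τ) - ⟪h' (p τ), xb - p τ⟫) with hψdef
    -- continuity pieces
    have tsub : Tendsto (fun τ => xb - p τ) (𝓝 0) (𝓝 0) := by
      have := (tendsto_const_nhds (α := ℝ) (x := xb)).sub htp
      simpa using this
    have tF : Tendsto (fun τ => F (p τ)) (𝓝 0) (𝓝 (F xb)) :=
      ((hf' xb hxbC).continuousAt.tendsto).comp htp
    have tH : Tendsto (fun τ => H (p τ)) (𝓝 0) (𝓝 (H xb)) :=
      ((hLeg.differentiable xb hxbC).continuousAt.tendsto).comp htp
    have th' : Tendsto (fun τ => h' (p τ)) (𝓝 0) (𝓝 (h' xb)) :=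
      ((hLeg.gradContinuous.continuousAt (hCo.mem_nhds hxbC)).tendsto).comp htp
    have thi : Tendsto (fun τ => ⟪h' (p τ), xb - p τ⟫) (𝓝 0) (𝓝 0) := by
      have := Filter.Tendsto.inner (𝕜 := ℝ) th' tsub
      simpa only [inner_zero_right] using this
    have tfi : Tendsto (fun τ => ⟪f' (p τ), xb - p τ⟫) (𝓝 0) (𝓝 0) := by
      apply squeeze_zero_norm' (a := fun τ => K * ‖xb - p τ‖ + ‖xb - p τ‖)
      · filter_upwards [hf'bound] with τ hK
        calc ‖⟪f' (p τ), xb - p τ⟫‖ ≤ ‖f' (p τ)‖ * ‖xb - p τ‖ := norm_inner_le_norm _ _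
          _ ≤ K * ‖xb - p τ‖ := by
              exact mul_le_mul_of_nonneg_right hK (norm_nonneg _)
          _ ≤ K * ‖xb - p τ‖ + ‖xb - p τ‖ := le_add_of_nonneg_right (norm_nonneg _)
      · have := (tsub.norm.const_mul K).add tsub.norm
        simpa using this
    have tψ : Tendsto ψ (𝓝 0) (𝓝 (F xb + G)) := by
      have h1 := ((tF.add tfi).add (tendsto_const_nhds (α := ℝ) (x := G))).add
        ((((tendsto_const_nhds (α := ℝ) (x := H xb)).sub tH).sub thi).const_mul (1/γ))
      have h2 : F xb + 0 + G + 1/γ * (H xb - H xb - 0) = F xb + G := by ring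
      rw [← h2]
      exact h1
    -- strict inequality at the limit
    have hσγ : σ * γ < 1 - γ * Lf := by
      have := (lt_div_iff₀ hγ).mp hσlt
      linarith
    have hγinv : γ * (1/γ) = 1 := by field_simp
    have hcoef : 0 < 1/γ - Lf - σ := by nlinarith
    have hlim_lt : F xb + G < r0 - σ * D := by
      have h1 : 0 < (1/γ - Lf - σ) * D := mul_pos hcoef hDpos
      rw [hr0def]
      nlinarith
    have hE2 : ∀ᶠ τ in 𝓝 (0:ℝ), ψ τ < r0 - σ * D := tψ.eventually_lt_const hlim_lt
    -- conclude
    obtain ⟨τbar, hτ0, hτ1, hτS⟩ := exists_taubar (hE1.and hE2)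
    refine ⟨τbar, hτ0, hτ1, fun τ hτa hτb => ?_⟩
    obtain ⟨hpC, hψlt⟩ := hτS τ hτa hτb
    refine ⟨hpC, ?_⟩
    have step1 : fbEnv h h' f f' g γ (p τ) ≤ fbObj h h' f f' g γ (p τ) xb := iInf_le _ xb
    have step2 : fbObj h h' f f' g γ (p τ) xb = ((ψ τ : ℝ) : EReal) := by
      rw [hobj (p τ) hpC, hG, ← EReal.coe_add, ← EReal.coe_add, hψdef]
    have step3 : ((ψ τ : ℝ) : EReal) ≤ ((r0 - σ * D : ℝ) : EReal) :=
      EReal.coe_le_coe_iff.mpr (le_of_lt hψlt)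
    have step4 : ((r0 : ℝ) : EReal) = fbObj h h' f f' g γ x xb := by
      rw [hobj x hx, hG, ← EReal.coe_add, ← EReal.coe_add, hr0def]
    calc fbEnv h h' f f' g γ (p τ) ≤ ((ψ τ : ℝ) : EReal) := step2 ▸ step1
      _ ≤ ((r0 - σ * D : ℝ) : EReal) := step3
      _ = ((r0 : ℝ) : EReal) - ((σ * D : ℝ) : EReal) := by rw [EReal.coe_sub]
      _ ≤ fbEnv h h' f f' g γ x - ((σ : ℝ) : EReal) * Dbreg h h' xb x := by
          rw [hDbreg, ← EReal.coe_mul]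
          exact EReal.sub_le_sub (step4 ▸ hkey) (le_refl _)
end

section
/- Under the standing assumptions, let γ ∈ (0, 1/L_f), σ > 0, and ε > 0. Let x⁰, x¹, …, x^K ∈ C and x̄ᵏ ∈ T_γ(xᵏ) for k = 0, …, K−1 be such that the descent inequality φ_γ(x^{k+1}) ≤ φ_γ(xᵏ) − σ·D_h(x̄ᵏ, xᵏ) holds for all k = 0, …, K−1, and suppose D_h(x̄ᵏ, xᵏ) > ε for all k = 0, …, K−1. Then K ≤ (φ(x⁰) − inf_{cl C} φ)/(σε). -/
open Filter Topology Set Bornology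
open scoped RealInnerProductSpace

section AuxProofs

variable {n : ℕ}

private lemma aux_convexOn_real {S : Set (Rn n)} (hSconv : Convex ℝ S)
    {F : Rn n → EReal} (hF : ERealConvexOn S F) {G : Rn n → ℝ}
    (hfin : ∀ w ∈ S, F w = ((G w : ℝ) : EReal)) :
    ConvexOn ℝ S G := by
  refine ⟨hSconv, fun p hp q hq a b ha hb hab => ?_⟩
  have h1 := hF hp hq ha hb hab
  rw [hfin p hp, hfin q hq, hfin _ (hSconv hp hq ha hb hab), ← EReal.coe_mul, ← EReal.coe_mul,
    ← EReal.coe_add, EReal.coe_le_coe_iff] at h1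
  simpa [smul_eq_mul] using h1

private lemma aux_grad_ineq {S : Set (Rn n)} {F : Rn n → ℝ} (hF : ConvexOn ℝ S F)
    {p z : Rn n} (hp : p ∈ S) (hz : z ∈ S)
    {L : Rn n →L[ℝ] ℝ} (hL : HasFDerivAt F L p) :
    F p + L (z - p) ≤ F z := by
  set d := z - p with hd
  have hc : HasDerivAt (fun t : ℝ => p + t • d) d 0 := by
    simpa using ((hasDerivAt_id (0 : ℝ)).smul_const d).const_add p
  have h0 : p + (0 : ℝ) • d = p := by simp
  have hcomp : HasDerivAt (fun t : ℝ => F (p + t • d)) (L d) 0 :=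
    (h0.symm ▸ hL : HasFDerivAt F L (p + (0 : ℝ) • d)).comp_hasDerivAt 0 hc
  have hslope : Filter.Tendsto (slope (fun t : ℝ => F (p + t • d)) 0) (𝓝[>] 0) (𝓝 (L d)) :=
    (hasDerivAt_iff_tendsto_slope.1 hcomp).mono_left
      (nhdsWithin_mono 0 fun t ht => Set.mem_compl_singleton_iff.2 (ne_of_gt ht))
  have hev : ∀ᶠ t in 𝓝[>] (0 : ℝ), slope (fun t : ℝ => F (p + t • d)) 0 t ≤ F z - F p := by
    filter_upwards [Ioo_mem_nhdsGT_of_mem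
      (⟨le_refl 0, zero_lt_one⟩ : (0 : ℝ) ∈ Set.Ico (0 : ℝ) 1)] with t ht
    have hcv := hF.2 hp hz (by linarith [ht.2] : (0 : ℝ) ≤ 1 - t) ht.1.le (by ring)
    have hxe : (1 - t) • p + t • z = p + t • d := by rw [hd]; module
    rw [hxe, smul_eq_mul, smul_eq_mul] at hcv
    have hsl : slope (fun t : ℝ => F (p + t • d)) 0 t = (F (p + t • d) - F p) / t := by
      simp [slope_def_field]
    rw [hsl, div_le_iff₀ ht.1]
    nlinarith [hcv]
  have := le_of_tendsto hslope hev
  linarith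

end AuxProofs

-- STATEMENT 16
set_option maxHeartbeats 2000000 in
theorem stmt16_iteration_complexity
    {n : ℕ} (h : Rn n → EReal) (h' : Rn n → Rn n) (f : Rn n → EReal) (f' : Rn n → Rn n)
    (g : Rn n → EReal) (Lf γ σ ε : ℝ)
    (hLeg : LegendreKernel h h') (hLf : 0 ≤ Lf) (hRel : RelSmooth h f Lf)
    (hf' : ∀ x ∈ interior (edom h), HasGradientAt (fun y => (f y).toReal) (f' x) x)
    (hg : ERealProper g) (hglsc : LowerSemicontinuous g)
    (hγ : 0 < γ) (hγL : γ * Lf < 1)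
    (hrange : ∀ x ∈ interior (edom h), fbT h h' f f' g γ x ⊆ interior (edom h))
    (xm : Rn n) (hxm : xm ∈ closure (interior (edom h))) (hxmfin : f xm + g xm ≠ ⊤)
    (hmin : ∀ y ∈ closure (interior (edom h)), f xm + g xm ≤ f y + g y)
    (hσ : 0 < σ) (hε : 0 < ε)
    (K : ℕ) (x xb : ℕ → Rn n)
    (hxC : ∀ k ≤ K, x k ∈ interior (edom h))
    (hxb : ∀ k < K, xb k ∈ fbT h h' f f' g γ (x k))
    (hdesc : ∀ k < K,
      fbEnv h h' f f' g γ (x (k + 1))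
        ≤ fbEnv h h' f f' g γ (x k) - ((σ : ℝ) : EReal) * Dbreg h h' (xb k) (x k))
    (hbig : ∀ k < K, ((ε : ℝ) : EReal) < Dbreg h h' (xb k) (x k)) :
    (((K : ℝ) * (σ * ε) : ℝ) : EReal) ≤ (f (x 0) + g (x 0)) - (f xm + g xm) := by
  classical
  have hhne_bot : ∀ w, h w ≠ ⊥ := hLeg.proper.2
  have hfne_bot : ∀ w, f w ≠ ⊥ := hRel.1.2
  have hgne_bot : ∀ w, g w ≠ ⊥ := hg.2
  have hfdom : edom h ⊆ edom f := hRel.2.2.1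
  have hflsc : LowerSemicontinuous f := hRel.2.1
  have hcoe_h : ∀ w, w ∈ edom h → h w = (((h w).toReal : ℝ) : EReal) := fun w hw =>
    (EReal.coe_toReal (show h w < ⊤ from hw).ne (hhne_bot w)).symm
  have hcoe_f : ∀ w, w ∈ edom h → f w = (((f w).toReal : ℝ) : EReal) := fun w hw =>
    (EReal.coe_toReal (show f w < ⊤ from hfdom hw).ne (hfne_bot w)).symm
  have hdomconv : Convex ℝ (edom h) := by
    intro p hp q hq a b ha hb hab
    have h1 := hLeg.convex (Set.mem_univ p) (Set.mem_univ q) ha hb hab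
    have h2 : (a : EReal) * h p + (b : EReal) * h q
        = ((a * (h p).toReal + b * (h q).toReal : ℝ) : EReal) := by
      rw [hcoe_h p hp, hcoe_h q hq]; norm_cast
    show h (a • p + b • q) < ⊤
    exact lt_of_le_of_lt (h2 ▸ h1) (EReal.coe_lt_top _)
  set S := interior (edom h) with hSdef
  have hSsub : S ⊆ edom h := interior_subset
  have hSconv : Convex ℝ S := hdomconv.interior
  have hconvh : ConvexOn ℝ S (fun w => (h w).toReal) :=
    aux_convexOn_real hSconv
      (fun p _ q _ a b ha hb hab => hLeg.convex (Set.mem_univ p) (Set.mem_univ q) ha hb hab)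
      (fun w hw => hcoe_h w (hSsub hw))
  have hψcoe : ∀ w ∈ S, (Lf : EReal) * h w - f w
      = ((Lf * (h w).toReal - (f w).toReal : ℝ) : EReal) := by
    intro w hw
    rw [hcoe_h w (hSsub hw), hcoe_f w (hSsub hw)]; norm_cast
  have hconvψ : ConvexOn ℝ S (fun w => Lf * (h w).toReal - (f w).toReal) :=
    aux_convexOn_real hSconv hRel.2.2.2.2 hψcoe
  have Ih : ∀ p ∈ S, ∀ w ∈ S, (h p).toReal + ⟪h' p, w - p⟫ ≤ (h w).toReal := by
    intro p hp w hw
    have := aux_grad_ineq hconvh hp hw (hLeg.differentiable p hp).hasFDerivAt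
    simpa [InnerProductSpace.toDual_apply_apply] using this
  have Iψ : ∀ p ∈ S, ∀ w ∈ S,
      (Lf * (h p).toReal - (f p).toReal) + (Lf * ⟪h' p, w - p⟫ - ⟪f' p, w - p⟫)
        ≤ Lf * (h w).toReal - (f w).toReal := by
    intro p hp w hw
    have hdψ : HasFDerivAt (fun w => Lf * (h w).toReal - (f w).toReal)
        ((Lf • (InnerProductSpace.toDual ℝ (Rn n) (h' p))
          - (InnerProductSpace.toDual ℝ (Rn n) (f' p)) : Rn n →L[ℝ] ℝ)) p :=
      (((hLeg.differentiable p hp).hasFDerivAt).const_mul Lf).sub (hf' p hp).hasFDerivAt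
    have := aux_grad_ineq hconvψ hp hw hdψ
    simpa [ContinuousLinearMap.sub_apply, ContinuousLinearMap.smul_apply,
      InnerProductSpace.toDual_apply_apply, smul_eq_mul] using this
  have hseg : ∀ p ∈ S, ∀ z ∈ edom h, ∀ t ∈ Set.Ioo (0 : ℝ) 1, p + t • (z - p) ∈ S := by
    intro p hp z hz t ht
    have hmem := hdomconv.combo_interior_self_mem_interior hp hz
      (by linarith [ht.2] : (0 : ℝ) < 1 - t) ht.1.le (by ring)
    have hxe : (1 - t) • p + t • z = p + t • (z - p) := by module
    rwa [hxe] at hmem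
  have hTt : ∀ p z : Rn n,
      Filter.Tendsto (fun t : ℝ => p + t • (z - p)) (𝓝[<] (1 : ℝ)) (𝓝 z) := by
    intro p z
    have hcont : Continuous fun t : ℝ => p + t • (z - p) := by continuity
    have h2 : Filter.Tendsto (fun t : ℝ => p + t • (z - p)) (𝓝[<] (1 : ℝ)) (𝓝 (p + (1:ℝ) • (z - p))) :=
      (hcont.tendsto 1).mono_left (nhdsWithin_le_nhds (s := Set.Iio (1:ℝ)))
    simpa using h2
  have hev3 : ∀ᶠ t in 𝓝[<] (1 : ℝ), t ∈ Set.Ioo (0 : ℝ) 1 :=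
    Ioo_mem_nhdsLT_of_mem ⟨zero_lt_one, le_refl 1⟩
  have hclS : ∀ z ∈ edom h, z ∈ closure S := by
    intro z hz
    rcases hLeg.nonemptyInterior with ⟨p, hp⟩
    exact mem_closure_of_tendsto (hTt p z)
      (hev3.mono fun t ht => hseg p hp z hz t ht)
  have hcomb : ∀ p ∈ S, ∀ z ∈ edom h, ∀ t ∈ Set.Ioo (0 : ℝ) 1,
      (h (p + t • (z - p))).toReal ≤ (1 - t) * (h p).toReal + t * (h z).toReal := by
    intro p hp z hz t ht
    have h1 := hLeg.convex (Set.mem_univ p) (Set.mem_univ z)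
      (by linarith [ht.2] : (0 : ℝ) ≤ 1 - t) ht.1.le (by ring)
    have hxe : (1 - t) • p + t • z = p + t • (z - p) := by module
    rw [hxe, hcoe_h p (hSsub hp), hcoe_h z hz, ← EReal.coe_mul, ← EReal.coe_mul,
      ← EReal.coe_add] at h1
    have := EReal.toReal_le_toReal h1 (hhne_bot _) (EReal.coe_ne_top _)
    rwa [EReal.toReal_coe] at this
  have hDpos : ∀ p ∈ S, ∀ z ∈ edom h,
      (h p).toReal + ⟪h' p, z - p⟫ ≤ (h z).toReal := by
    intro p hp z hz
    have hm := hseg p hp z hz (1/2) (by norm_num)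
    have h1 := Ih p hp _ hm
    have h2 := hcomb p hp z hz (1/2) (by norm_num)
    rw [show p + (1/2 : ℝ) • (z - p) - p = (1/2 : ℝ) • (z - p) by abel,
      real_inner_smul_right] at h1
    linarith
  have hrel : ∀ p ∈ S, ∀ z ∈ edom h,
      (f z).toReal ≤ (f p).toReal + ⟪f' p, z - p⟫
        + Lf * ((h z).toReal - (h p).toReal - ⟪h' p, z - p⟫) := by
    intro p hp z hz
    by_contra hcon
    push_neg at hcon
    set y : ℝ := ((f p).toReal + (⟪f' p, z - p⟫
      + Lf * ((h z).toReal - (h p).toReal - ⟪h' p, z - p⟫)) + (f z).toReal) / 2 with hy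
    have hy1 : (f p).toReal + (⟪f' p, z - p⟫
        + Lf * ((h z).toReal - (h p).toReal - ⟪h' p, z - p⟫)) < y := by
      rw [hy]; linarith
    have hy2 : y < (f z).toReal := by rw [hy]; linarith
    have hev1 : ∀ᶠ w in 𝓝 z, ((y : ℝ) : EReal) < f w := by
      apply hflsc z
      rw [hcoe_f z hz]
      exact_mod_cast hy2
    have hev2 := (hTt p z).eventually hev1
    have hev4 : ∀ᶠ t in 𝓝[<] (1 : ℝ),
        t * (⟪f' p, z - p⟫ + Lf * ((h z).toReal - (h p).toReal - ⟪h' p, z - p⟫))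
          < y - (f p).toReal := by
      apply Filter.Tendsto.eventually_lt_const (by linarith :
        (⟪f' p, z - p⟫ + Lf * ((h z).toReal - (h p).toReal - ⟪h' p, z - p⟫))
          < y - (f p).toReal)
      have hmul : Filter.Tendsto (fun t : ℝ => t * (⟪f' p, z - p⟫
          + Lf * ((h z).toReal - (h p).toReal - ⟪h' p, z - p⟫))) (𝓝 (1 : ℝ))
          (𝓝 (⟪f' p, z - p⟫ + Lf * ((h z).toReal - (h p).toReal - ⟪h' p, z - p⟫))) := by
        exact (continuous_mul_right _).tendsto' 1 _ (one_mul _)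
      exact hmul.mono_left nhdsWithin_le_nhds
    obtain ⟨t, ⟨hta, htI⟩, htb⟩ := ((hev2.and hev3).and hev4).exists
    have hwS : p + t • (z - p) ∈ S := hseg p hp z hz t htI
    have h5 := Iψ p hp _ hwS
    rw [show p + t • (z - p) - p = t • (z - p) by abel, real_inner_smul_right,
      real_inner_smul_right] at h5
    have h6 := mul_le_mul_of_nonneg_left (hcomb p hp z hz t htI) hLf
    have hchain : (f (p + t • (z - p))).toReal ≤ (f p).toReal
        + t * (⟪f' p, z - p⟫ + Lf * ((h z).toReal - (h p).toReal - ⟪h' p, z - p⟫)) := by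
      nlinarith [h5, h6]
    rw [hcoe_f _ (hSsub hwS), EReal.coe_lt_coe_iff] at hta
    linarith
  -- lower bound for the objective of the subproblem
  have hmlow : ∀ p ∈ S, ∀ z : Rn n, f xm + g xm ≤ fbObj h h' f f' g γ p z := by
    intro p hp z
    by_cases hz : z ∈ edom h
    · have h1 := hmin z (hclS z hz)
      have hLf' : Lf ≤ 1/γ := by
        rw [le_div_iff₀ hγ]; nlinarith
      have h4 := hDpos p hp z hz
      have h2 : (f z).toReal ≤ (f p).toReal + ⟪f' p, z - p⟫
          + (1/γ) * ((h z).toReal - (h p).toReal - ⟪h' p, z - p⟫) := by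
        have h3 := hrel p hp z hz
        nlinarith [mul_le_mul_of_nonneg_right hLf'
          (by linarith : (0 : ℝ) ≤ (h z).toReal - (h p).toReal - ⟪h' p, z - p⟫)]
      unfold fbObj Dbreg
      rw [if_pos (show p ∈ interior (edom h) from hp)]
      rw [hcoe_h z hz, hcoe_h p (hSsub hp), hcoe_f p (hSsub hp)]
      rw [show ((((h z).toReal : ℝ) : EReal) - (((h p).toReal : ℝ) : EReal)
          - ((⟪h' p, z - p⟫ : ℝ) : EReal))
          = (((h z).toReal - (h p).toReal - ⟪h' p, z - p⟫ : ℝ) : EReal) by norm_cast,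
        ← EReal.coe_mul]
      calc f xm + g xm ≤ f z + g z := h1
        _ = (((f z).toReal : ℝ) : EReal) + g z := by rw [← hcoe_f z hz]
        _ ≤ ((((f p).toReal + ⟪f' p, z - p⟫
            + (1/γ) * ((h z).toReal - (h p).toReal - ⟪h' p, z - p⟫) : ℝ)) : EReal) + g z :=
          add_le_add_left (EReal.coe_le_coe_iff.2 h2) _
        _ = _ := by rw [EReal.coe_add, EReal.coe_add, add_right_comm]
    · have hz' : h z = ⊤ := top_le_iff.1 (not_lt.1 hz)
      unfold fbObj Dbreg
      rw [if_pos (show p ∈ interior (edom h) from hp)]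
      rw [hz', hcoe_h p (hSsub hp), EReal.top_sub_coe, EReal.top_sub_coe,
        EReal.coe_mul_top_of_pos (by positivity : (0 : ℝ) < 1/γ)]
      have hX : f p + ((⟪f' p, z - p⟫ : ℝ) : EReal) + g z ≠ ⊥ := by
        simp [EReal.add_eq_bot_iff, hfne_bot p, hgne_bot z]
      rw [EReal.add_top_of_ne_bot hX]
      exact le_top
  have hlow : ∀ p ∈ S, f xm + g xm ≤ fbEnv h h' f f' g γ p := fun p hp =>
    le_iInf fun z => hmlow p hp z
  -- upper bound at x 0
  have hx0 : x 0 ∈ S := hxC 0 (Nat.zero_le K)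
  have hup : fbEnv h h' f f' g γ (x 0) ≤ f (x 0) + g (x 0) := by
    have h1 : fbEnv h h' f f' g γ (x 0) ≤ fbObj h h' f f' g γ (x 0) (x 0) := iInf_le _ _
    refine h1.trans (le_of_eq ?_)
    unfold fbObj Dbreg
    rw [if_pos (show x 0 ∈ interior (edom h) from hx0)]
    rw [sub_self, inner_zero_right, inner_zero_right, hcoe_h (x 0) (hSsub hx0)]
    rw [show ((((h (x 0)).toReal : ℝ) : EReal) - (((h (x 0)).toReal : ℝ) : EReal)
        - (((0 : ℝ) : ℝ) : EReal)) = (((0 : ℝ)) : EReal) by norm_cast; ring]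
    simp
  -- one-step decrease
  have hstep : ∀ k, k < K → fbEnv h h' f f' g γ (x (k+1)) + ((σ * ε : ℝ) : EReal)
      ≤ fbEnv h h' f f' g γ (x k) := by
    intro k hk
    have hσD : ((σ * ε : ℝ) : EReal) ≤ ((σ : ℝ) : EReal) * Dbreg h h' (xb k) (x k) := by
      by_cases hD : Dbreg h h' (xb k) (x k) = ⊤
      · rw [hD, EReal.coe_mul_top_of_pos hσ]; exact le_top
      · have hDb : Dbreg h h' (xb k) (x k) ≠ ⊥ := fun hbot =>
          absurd (hbig k hk) (by rw [hbot]; exact not_lt_bot)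
        have hb := hbig k hk
        rw [← EReal.coe_toReal hD hDb] at hb ⊢
        rw [← EReal.coe_mul, EReal.coe_le_coe_iff]
        exact mul_le_mul_of_nonneg_left (le_of_lt (EReal.coe_lt_coe_iff.1 hb)) hσ.le
    calc fbEnv h h' f f' g γ (x (k+1)) + ((σ * ε : ℝ) : EReal)
        ≤ (fbEnv h h' f f' g γ (x k) - ((σ : ℝ) : EReal) * Dbreg h h' (xb k) (x k))
            + ((σ * ε : ℝ) : EReal) := add_le_add_left (hdesc k hk) _
      _ ≤ (fbEnv h h' f f' g γ (x k) - ((σ * ε : ℝ) : EReal)) + ((σ * ε : ℝ) : EReal) :=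
          add_le_add_left (EReal.sub_le_sub le_rfl hσD) _
      _ = fbEnv h h' f f' g γ (x k) := EReal.sub_add_cancel
  -- induction
  have hind : ∀ k, k ≤ K → fbEnv h h' f f' g γ (x k) + (((k : ℝ) * (σ * ε) : ℝ) : EReal)
      ≤ f (x 0) + g (x 0) := by
    intro k
    induction k with
    | zero => intro _; simpa using hup
    | succ k ih =>
      intro hk
      have hk' : k < K := Nat.lt_of_succ_le hk
      have h1 := ih hk'.le
      have h2 := hstep k hk'
      have he : ((((k+1 : ℕ) : ℝ) * (σ * ε) : ℝ) : EReal)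
          = ((σ * ε : ℝ) : EReal) + (((k : ℝ) * (σ * ε) : ℝ) : EReal) := by
        rw [← EReal.coe_add]
        norm_cast
        push_cast
        ring
      calc fbEnv h h' f f' g γ (x (k+1)) + ((((k+1 : ℕ) : ℝ) * (σ * ε) : ℝ) : EReal)
          = (fbEnv h h' f f' g γ (x (k+1)) + ((σ * ε : ℝ) : EReal))
              + (((k : ℝ) * (σ * ε) : ℝ) : EReal) := by rw [he, ← add_assoc]
        _ ≤ fbEnv h h' f f' g γ (x k) + (((k : ℝ) * (σ * ε) : ℝ) : EReal) :=
            add_le_add_left h2 _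
        _ ≤ f (x 0) + g (x 0) := h1
  have hfinal := hind K le_rfl
  have hm := hlow (x K) (hxC K le_rfl)
  have h3 : (f xm + g xm) + (((K : ℝ) * (σ * ε) : ℝ) : EReal) ≤ f (x 0) + g (x 0) :=
    le_trans (add_le_add_left hm _) hfinal
  have hmne_bot : f xm + g xm ≠ ⊥ := by
    simp [EReal.add_eq_bot_iff, hfne_bot xm, hgne_bot xm]
  rw [← EReal.coe_toReal hxmfin hmne_bot] at h3 ⊢
  rw [EReal.le_sub_iff_add_le (Or.inl (EReal.coe_ne_bot _)) (Or.inl (EReal.coe_ne_top _))]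
  calc (((K : ℝ) * (σ * ε) : ℝ) : EReal) + (((f xm + g xm).toReal : ℝ) : EReal)
      = (((f xm + g xm).toReal : ℝ) : EReal) + (((K : ℝ) * (σ * ε) : ℝ) : EReal) := add_comm _ _
    _ ≤ f (x 0) + g (x 0) := h3
end

section
/- Under the standing assumptions, suppose additionally that dom h = ℝⁿ (so C = ℝⁿ) and that φ is level bounded. Let γ ∈ (0, 1/L_f), let (xᵏ) ⊆ ℝⁿ and x̄ᵏ ∈ T_γ(xᵏ) with D_h(x̄ᵏ, xᵏ) → 0, and suppose φ_γ(xᵏ) converges to a finite value φ⋆ with φ(x̄ᵏ) → φ⋆. Then for every subsequence with x^{k_j} → x⋆, also x̄^{k_j} → x⋆, the limit point satisfies the fixed-point inclusion x⋆ ∈ T_γ(x⋆), and φ(x⋆) = φ⋆. -/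
open Filter Topology Set Bornology
open scoped RealInnerProductSpace

-- AUXILIARY LEMMAS

section Aux

variable {n : ℕ}

/-- Derivative of `t ↦ G (x + t • u)` at `0`, given gradient `p` of `G` at `x`. -/
theorem aux_line_deriv {G : Rn n → ℝ} {x p : Rn n} (hp : HasGradientAt G p x) (u : Rn n) :
    HasDerivAt (fun t : ℝ => G (x + t • u)) ⟪p, u⟫ 0 := by
  have hc : HasDerivAt (fun t : ℝ => x + t • u) u 0 := by
    simpa using ((hasDerivAt_id (0:ℝ)).smul_const u).const_add x
  have hfd : HasFDerivAt G ((InnerProductSpace.toDual ℝ (Rn n)) p) (x + (0:ℝ) • u) := by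
    simpa using hp.hasFDerivAt
  have hcomp := hfd.comp_hasDerivAt 0 hc
  simp only [InnerProductSpace.toDual_apply_apply] at hcomp
  exact hcomp

/-- Gradient inequality for a convex differentiable function. -/
theorem aux_grad_ineq_s18 {G : Rn n → ℝ} (hG : ConvexOn ℝ univ G) {x p : Rn n}
    (hp : HasGradientAt G p x) (y : Rn n) : G x + ⟪p, y - x⟫ ≤ G y := by
  have hψ := aux_line_deriv hp (y - x)
  have hslope : Tendsto (slope (fun t : ℝ => G (x + t • (y - x))) 0) (𝓝[>] 0)
      (𝓝 ⟪p, y - x⟫) :=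
    (hasDerivAt_iff_tendsto_slope.mp hψ).mono_left (nhdsWithin_mono _ fun t ht => ne_of_gt ht)
  have hev : ∀ᶠ t in 𝓝[>] (0:ℝ), slope (fun t : ℝ => G (x + t • (y - x))) 0 t ≤ G y - G x := by
    filter_upwards [Ioo_mem_nhdsGT_of_mem (by norm_num : (0:ℝ) ∈ Ico (0:ℝ) 1)] with t ht
    have h1 : x + t • (y - x) = (1 - t) • x + t • y := by
      simp [smul_sub, sub_smul]; abel
    have hconv := hG.2 (mem_univ x) (mem_univ y) (by linarith [ht.2] : (0:ℝ) ≤ 1 - t)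
      (le_of_lt ht.1) (by ring)
    have h2 : G (x + t • (y - x)) ≤ (1 - t) * G x + t * G y := by
      rw [h1]; simpa [smul_eq_mul] using hconv
    rw [slope_def_field]
    simp only [sub_zero, zero_smul, add_zero]
    rw [div_le_iff₀ ht.1]
    nlinarith [ht.1]
  have := le_of_tendsto hslope hev
  linarith

/-- A subgradient at a point of differentiability equals the gradient. -/
theorem aux_subgrad_eq {G : Rn n → ℝ} {x p q : Rn n}
    (hsub : ∀ y, G x + ⟪p, y - x⟫ ≤ G y) (hq : HasGradientAt G q x) : p = q := by
  have key : ∀ u : Rn n, ⟪p, u⟫ ≤ ⟪q, u⟫ := by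
    intro u
    have hψ := aux_line_deriv hq u
    have hslope : Tendsto (slope (fun t : ℝ => G (x + t • u)) 0) (𝓝[>] 0) (𝓝 ⟪q, u⟫) :=
      (hasDerivAt_iff_tendsto_slope.mp hψ).mono_left (nhdsWithin_mono _ fun t ht => ne_of_gt ht)
    have hev : ∀ᶠ t in 𝓝[>] (0:ℝ), ⟪p, u⟫ ≤ slope (fun t : ℝ => G (x + t • u)) 0 t := by
      filter_upwards [self_mem_nhdsWithin] with t ht
      have := hsub (x + t • u)
      rw [slope_def_field]
      simp only [sub_zero, zero_smul, add_zero]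
      rw [le_div_iff₀ ht]
      have hinner : ⟪p, x + t • u - x⟫ = t * ⟪p, u⟫ := by
        simp [inner_smul_right]
      nlinarith [this, hinner]
    exact le_of_tendsto_of_tendsto tendsto_const_nhds hslope hev
  have h1 := key (p - q)
  have h2 : ⟪p - q, p - q⟫ ≤ 0 := by
    have h3 := sub_nonneg.mpr h1
    rw [← inner_sub_left] at h3
    have h4 : ⟪q - p, p - q⟫ = -⟪p - q, p - q⟫ := by
      rw [show q - p = -(p - q) by abel, inner_neg_left]
    linarith
  have h5 : ‖p - q‖ ^ 2 ≤ 0 := by rw [← real_inner_self_eq_norm_sq]; exact h2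
  have : p - q = 0 := by
    have := sq_nonneg ‖p - q‖
    have hn : ‖p - q‖ ^ 2 = 0 := le_antisymm h5 this
    simpa [pow_eq_zero_iff] using hn
  exact sub_eq_zero.mp this

/-- Sequential continuity of the gradient of a convex differentiable function. -/
theorem aux_grad_seq_cont {G : Rn n → ℝ} {G' : Rn n → Rn n} (hG : ConvexOn ℝ univ G)
    (hG' : ∀ y, HasGradientAt G (G' y) y) {z : ℕ → Rn n} {xs : Rn n}
    (hz : Tendsto z atTop (𝓝 xs)) : Tendsto (fun k => G' (z k)) atTop (𝓝 (G' xs)) := by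
  have Gcont : Continuous G := continuous_iff_continuousAt.mpr fun y => (hG' y).continuousAt
  obtain ⟨M, hM⟩ : ∃ M, ∀ y ∈ Metric.closedBall xs 2, ‖G y‖ ≤ M :=
    (isCompact_closedBall xs 2).exists_bound_of_continuousOn Gcont.continuousOn
  have hbnd : ∀ k, ‖z k - xs‖ ≤ 1 → ‖G' (z k)‖ ≤ 2 * M := by
    intro k hk
    rcases eq_or_ne (G' (z k)) 0 with h0 | h0
    · rw [h0, norm_zero]
      have := hM xs (Metric.mem_closedBall_self (by norm_num))
      have := norm_nonneg (G xs)
      linarith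
    · set u : Rn n := ‖G' (z k)‖⁻¹ • G' (z k) with hu
      have hun : ‖u‖ = 1 := norm_smul_inv_norm h0
      have hz2 : z k ∈ Metric.closedBall xs 2 := by
        rw [Metric.mem_closedBall, dist_eq_norm]; linarith
      have hzu2 : z k + u ∈ Metric.closedBall xs 2 := by
        rw [Metric.mem_closedBall, dist_eq_norm]
        have : ‖z k + u - xs‖ ≤ ‖z k - xs‖ + ‖u‖ := by
          rw [show z k + u - xs = (z k - xs) + u by abel]; exact norm_add_le _ _
        linarith
      have hineq := aux_grad_ineq_s18 hG (hG' (z k)) (z k + u)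
      have hinner : ⟪G' (z k), z k + u - z k⟫ = ‖G' (z k)‖ := by
        rw [show z k + u - z k = u by abel, hu, real_inner_smul_right,
          real_inner_self_eq_norm_sq]
        have hn0 : ‖G' (z k)‖ ≠ 0 := norm_ne_zero_iff.mpr h0
        field_simp
      rw [hinner] at hineq
      have h1 := (abs_le.mp (hM _ hz2)).1
      have h2 := (abs_le.mp (hM _ hzu2)).2
      simp only [Real.norm_eq_abs] at h1 h2 hM
      linarith
  have hev : ∀ᶠ k in atTop, G' (z k) ∈ Metric.closedBall (0 : Rn n) (2 * M) := by
    filter_upwards [hz (Metric.closedBall_mem_nhds xs one_pos)] with k hk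
    rw [Metric.mem_closedBall, dist_zero_right]
    exact hbnd k (by rw [← dist_eq_norm]; exact hk)
  refine tendsto_of_subseq_tendsto fun ns hns => ?_
  obtain ⟨p, -, ms, hms, hmt⟩ := tendsto_subseq_of_frequently_bounded
    (Metric.isBounded_closedBall (x := (0:Rn n)) (r := 2*M)) ((hns.eventually hev).frequently)
  have hzt : Tendsto (fun j => z (ns (ms j))) atTop (𝓝 xs) :=
    (hz.comp hns).comp hms.tendsto_atTop
  have hp : p = G' xs := by
    refine aux_subgrad_eq (fun y => ?_) (hG' xs)
    have hle : ∀ j, G (z (ns (ms j))) + ⟪G' (z (ns (ms j))), y - z (ns (ms j))⟫ ≤ G y :=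
      fun j => aux_grad_ineq_s18 hG (hG' _) y
    have ht : Tendsto (fun j => G (z (ns (ms j))) + ⟪G' (z (ns (ms j))), y - z (ns (ms j))⟫)
        atTop (𝓝 (G xs + ⟪p, y - xs⟫)) :=
      ((Gcont.continuousAt.tendsto.comp hzt).add
        ((continuous_inner.tendsto _).comp (hmt.prodMk_nhds
          (tendsto_const_nhds.sub hzt))))
    exact le_of_tendsto ht (Eventually.of_forall hle)
  exact ⟨ms, hp ▸ hmt⟩

end Aux
-- STATEMENT 18
theorem stmt18_subsequential_convergence
    {n : ℕ} (h : Rn n → EReal) (h' : Rn n → Rn n) (f : Rn n → EReal) (f' : Rn n → Rn n)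
    (g : Rn n → EReal) (Lf γ : ℝ)
    (hLeg : LegendreKernel h h') (hLf : 0 ≤ Lf) (hRel : RelSmooth h f Lf)
    (hf' : ∀ x ∈ interior (edom h), HasGradientAt (fun y => (f y).toReal) (f' x) x)
    (hg : ERealProper g) (hglsc : LowerSemicontinuous g)
    (hmin : ∃ xm ∈ closure (interior (edom h)),
      ∀ y ∈ closure (interior (edom h)), f xm + g xm ≤ f y + g y)
    (hfull : edom h = Set.univ)
    (hlb : ∀ α : ℝ, IsBounded {y | f y + g y ≤ (α : EReal)})
    (hγ : 0 < γ) (hγL : γ * Lf < 1)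
    (hrange : ∀ x ∈ interior (edom h), fbT h h' f f' g γ x ⊆ interior (edom h))
    (x xb : ℕ → Rn n)
    (hxb : ∀ k, xb k ∈ fbT h h' f f' g γ (x k))
    (hD : Tendsto (fun k => Dbreg h h' (xb k) (x k)) atTop (𝓝 (0 : EReal)))
    (φs : ℝ)
    (henv : Tendsto (fun k => fbEnv h h' f f' g γ (x k)) atTop (𝓝 ((φs : ℝ) : EReal)))
    (hφb : Tendsto (fun k => f (xb k) + g (xb k)) atTop (𝓝 ((φs : ℝ) : EReal))) :
    ∀ κ : ℕ → ℕ, StrictMono κ → ∀ xs : Rn n,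
      Tendsto (fun j => x (κ j)) atTop (𝓝 xs) →
      Tendsto (fun j => xb (κ j)) atTop (𝓝 xs)
      ∧ xs ∈ fbT h h' f f' g γ xs
      ∧ f xs + g xs = ((φs : ℝ) : EReal) := by
  classical
  have hint : interior (edom h) = Set.univ := by rw [hfull, interior_univ]
  have hmemint : ∀ y : Rn n, y ∈ interior (edom h) := by intro y; rw [hint]; trivial
  have hhtop : ∀ y, h y ≠ ⊤ := by
    intro y
    have hy : y ∈ edom h := by rw [hfull]; trivial
    exact hy.out.ne
  have hftop : ∀ y, f y ≠ ⊤ := by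
    intro y
    have hy : y ∈ edom f := hRel.2.2.1 (by rw [hfull]; trivial)
    exact hy.out.ne
  set H : Rn n → ℝ := fun y => (h y).toReal with hHdef
  set F : Rn n → ℝ := fun y => (f y).toReal with hFdef
  have hhco : ∀ y, ((H y : ℝ) : EReal) = h y := fun y =>
    EReal.coe_toReal (hhtop y) (hLeg.proper.2 y)
  have hfco : ∀ y, ((F y : ℝ) : EReal) = f y := fun y =>
    EReal.coe_toReal (hftop y) (hRel.1.2 y)
  have hHgrad : ∀ y, HasGradientAt H (h' y) y := fun y => hLeg.differentiable y (hmemint y)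
  have hFgrad : ∀ y, HasGradientAt F (f' y) y := fun y => hf' y (hmemint y)
  have hHcont : Continuous H := continuous_iff_continuousAt.mpr fun y => (hHgrad y).continuousAt
  have hFcont : Continuous F := continuous_iff_continuousAt.mpr fun y => (hFgrad y).continuousAt
  have hh'cont : Continuous h' := by
    have hc := hLeg.gradContinuous; rw [hint] at hc
    exact continuousOn_univ.mp hc
  have hHconv : ConvexOn ℝ univ H := by
    refine ⟨convex_univ, fun a _ b _ p q hp hq hpq => ?_⟩
    have hco := hLeg.convex (mem_univ a) (mem_univ b) hp hq hpq
    rw [← hhco a, ← hhco b, ← hhco (p • a + q • b), ← EReal.coe_mul, ← EReal.coe_mul,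
      ← EReal.coe_add, EReal.coe_le_coe_iff] at hco
    simpa [smul_eq_mul] using hco
  set G : Rn n → ℝ := fun y => Lf * H y - F y with hGdef
  have hGco : ∀ y, ((G y : ℝ) : EReal) = (Lf : EReal) * h y - f y := by
    intro y
    rw [← hhco y, ← hfco y, ← EReal.coe_mul, ← EReal.coe_sub]
  have hGconv : ConvexOn ℝ univ G := by
    refine ⟨convex_univ, fun a _ b _ p q hp hq hpq => ?_⟩
    have hc := hRel.2.2.2.2
    rw [hint] at hc
    have hco := hc (mem_univ a) (mem_univ b) hp hq hpq
    simp only [] at hco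
    rw [← hGco a, ← hGco b, ← hGco (p • a + q • b), ← EReal.coe_mul, ← EReal.coe_mul,
      ← EReal.coe_add, EReal.coe_le_coe_iff] at hco
    simpa [smul_eq_mul] using hco
  have hGgrad : ∀ y, HasGradientAt G (Lf • h' y - f' y) y := by
    intro y
    have h2 : HasFDerivAt (fun x0 => Lf • H x0 - F x0)
        (Lf • ((InnerProductSpace.toDual ℝ (Rn n)) (h' y))
          - (InnerProductSpace.toDual ℝ (Rn n)) (f' y)) y :=
      ((hHgrad y).hasFDerivAt.const_smul Lf).sub (hFgrad y).hasFDerivAt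
    rw [hasGradientAt_iff_hasFDerivAt, map_sub, map_smul]
    simpa [hGdef, smul_eq_mul] using h2
  have hHstrict : ∀ z x0 : Rn n, z ≠ x0 → H x0 + ⟪h' x0, z - x0⟫ < H z := by
    intro z x0 hne
    have hmid := hLeg.strictConvexOn (hmemint x0) (hmemint z) (Ne.symm hne)
      (by norm_num : (0:ℝ) < 1/2) (by norm_num : (0:ℝ) < 1/2) (by norm_num)
    rw [← hhco x0, ← hhco z, ← hhco ((1/2 : ℝ) • x0 + (1/2 : ℝ) • z), ← EReal.coe_mul,
      ← EReal.coe_mul, ← EReal.coe_add, EReal.coe_lt_coe_iff] at hmid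
    have hgi := aux_grad_ineq_s18 hHconv (hHgrad x0) ((1/2 : ℝ) • x0 + (1/2 : ℝ) • z)
    have hmx : (1/2 : ℝ) • x0 + (1/2 : ℝ) • z - x0 = (1/2 : ℝ) • (z - x0) := by
      rw [smul_sub]
      rw [show (1/2:ℝ) • x0 + (1/2:ℝ) • z - x0 = (1/2:ℝ) • z - ((1:ℝ) - 1/2) • x0 by
        rw [sub_smul, one_smul]; abel]
      norm_num
    rw [hmx, real_inner_smul_right] at hgi
    linarith
  set Dr : Rn n → Rn n → ℝ := fun z x0 => H z - H x0 - ⟪h' x0, z - x0⟫ with hDrdef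
  have hDco : ∀ z x0, Dbreg h h' z x0 = ((Dr z x0 : ℝ) : EReal) := by
    intro z x0
    rw [Dbreg, if_pos (hmemint x0), hDrdef]
    rw [← hhco z, ← hhco x0]
    norm_cast
  have hDrpos : ∀ z x0 : Rn n, z ≠ x0 → 0 < Dr z x0 := by
    intro z x0 hne
    have := hHstrict z x0 hne
    simp only [hDrdef]
    linarith
  have hDrzero : ∀ x0 : Rn n, Dr x0 x0 = 0 := by
    intro x0; simp [hDrdef]
  have hfbObj : ∀ x0 z, fbObj h h' f f' g γ x0 z
      = ((F x0 + ⟪f' x0, z - x0⟫ + 1 / γ * Dr z x0 : ℝ) : EReal) + g z := by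
    intro x0 z
    rw [fbObj, hDco, ← hfco x0, ← EReal.coe_mul, ← EReal.coe_add,
      add_right_comm _ (g z) _, ← EReal.coe_add]
  have henvk : ∀ k, fbEnv h h' f f' g γ (x k) = fbObj h h' f f' g γ (x k) (xb k) :=
    fun k => le_antisymm (iInf_le _ _) (le_iInf (hxb k))
  intro κ hκ xs hxκ
  have hκt : Tendsto κ atTop atTop := hκ.tendsto_atTop
  -- convergence of xb along the subsequence
  have hbdd : IsBounded {y : Rn n | f y + g y ≤ ((φs + 1 : ℝ) : EReal)} := hlb (φs + 1)
  have hevS : ∀ᶠ k in atTop, xb k ∈ {y : Rn n | f y + g y ≤ ((φs + 1 : ℝ) : EReal)} := by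
    have hlt : ((φs : ℝ) : EReal) < ((φs + 1 : ℝ) : EReal) := by
      exact_mod_cast (by linarith : φs < φs + 1)
    filter_upwards [hφb.eventually_lt_const hlt] with k hk
    exact le_of_lt hk
  have hDreal : Tendsto (fun k => Dr (xb k) (x k)) atTop (𝓝 0) := by
    have hD' : Tendsto (fun k => ((Dr (xb k) (x k) : ℝ) : EReal)) atTop (𝓝 ((0 : ℝ) : EReal)) := by
      simp only [← hDco, EReal.coe_zero]
      exact hD
    exact EReal.tendsto_coe.mp hD'
  have hxbκ : Tendsto (fun j => xb (κ j)) atTop (𝓝 xs) := by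
    refine tendsto_of_subseq_tendsto fun ns hns => ?_
    have hns' : Tendsto (fun m => κ (ns m)) atTop atTop := hκt.comp hns
    obtain ⟨x', -, ms, hms, hmt⟩ := tendsto_subseq_of_frequently_bounded hbdd
      ((hns'.eventually hevS).frequently)
    have hxbσ : Tendsto (fun j => xb (κ (ns (ms j)))) atTop (𝓝 x') := hmt
    have hσ : Tendsto (fun j => ns (ms j)) atTop atTop := hns.comp hms.tendsto_atTop
    have hxσ : Tendsto (fun j => x (κ (ns (ms j)))) atTop (𝓝 xs) := hxκ.comp hσ
    have hD1 : Tendsto (fun j => Dr (xb (κ (ns (ms j)))) (x (κ (ns (ms j))))) atTop (𝓝 0) :=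
      hDreal.comp (hns'.comp hms.tendsto_atTop)
    have hD2 : Tendsto (fun j => Dr (xb (κ (ns (ms j)))) (x (κ (ns (ms j))))) atTop
        (𝓝 (Dr x' xs)) := by
      have h1 : Tendsto (fun j => H (xb (κ (ns (ms j))))) atTop (𝓝 (H x')) :=
        (hHcont.tendsto _).comp hxbσ
      have h2 : Tendsto (fun j => H (x (κ (ns (ms j))))) atTop (𝓝 (H xs)) :=
        (hHcont.tendsto _).comp hxσ
      have h3 : Tendsto
          (fun j => (⟪h' (x (κ (ns (ms j)))), xb (κ (ns (ms j))) - x (κ (ns (ms j)))⟫ : ℝ))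
          atTop (𝓝 ⟪h' xs, x' - xs⟫) :=
        (continuous_inner.tendsto _).comp
          ((((hh'cont.tendsto _).comp hxσ)).prodMk_nhds (hxbσ.sub hxσ))
      simpa [hDrdef] using (h1.sub h2).sub h3
    have hzero : Dr x' xs = 0 := tendsto_nhds_unique hD2 hD1
    have hx'eq : x' = xs := by
      by_contra hne
      exact absurd hzero (ne_of_gt (hDrpos x' xs hne))
    exact ⟨ms, hx'eq ▸ hmt⟩
  -- convergence of the gradients along the subsequence
  have hh't : Tendsto (fun j => h' (x (κ j))) atTop (𝓝 (h' xs)) := (hh'cont.tendsto _).comp hxκ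
  have hf't : Tendsto (fun j => f' (x (κ j))) atTop (𝓝 (f' xs)) := by
    have hG't : Tendsto (fun j => Lf • h' (x (κ j)) - f' (x (κ j))) atTop
        (𝓝 (Lf • h' xs - f' xs)) := aux_grad_seq_cont hGconv hGgrad hxκ
    have := (hh't.const_smul Lf).sub hG't
    simpa [sub_sub_cancel] using this
  -- φ(xs) ≤ φs
  have hFxbt : Tendsto (fun j => F (xb (κ j))) atTop (𝓝 (F xs)) := (hFcont.tendsto _).comp hxbκ
  have hφbt : Tendsto (fun j => f (xb (κ j)) + g (xb (κ j))) atTop (𝓝 ((φs : ℝ) : EReal)) :=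
    hφb.comp hκt
  have hE : f xs + g xs ≤ ((φs : ℝ) : EReal) := by
    by_contra hcon
    push_neg at hcon
    have hlt : ((φs - F xs : ℝ) : EReal) < g xs := by
      rcases eq_or_ne (g xs) ⊤ with hgt | hgt
      · rw [hgt]; exact EReal.coe_lt_top _
      · have hgco : g xs = (((g xs).toReal : ℝ) : EReal) := (EReal.coe_toReal hgt (hg.2 xs)).symm
        rw [← hfco xs, hgco, ← EReal.coe_add, EReal.coe_lt_coe_iff] at hcon
        rw [hgco, EReal.coe_lt_coe_iff]
        linarith
    obtain ⟨r, hr1, hr2⟩ := EReal.exists_between_coe_real hlt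
    have hδ : φs - F xs < r := by exact_mod_cast hr1
    have hev1 : ∀ᶠ j in atTop, ((r : ℝ) : EReal) < g (xb (κ j)) :=
      hxbκ.eventually (hglsc xs _ hr2)
    set δ : ℝ := r - (φs - F xs) with hδdef
    have hδpos : 0 < δ := by simp only [hδdef]; linarith
    have hev2 : ∀ᶠ j in atTop, F xs - δ / 2 < F (xb (κ j)) :=
      hFxbt.eventually_const_lt (by linarith)
    have hev3 : ∀ᶠ j in atTop, f (xb (κ j)) + g (xb (κ j)) < ((φs + δ / 2 : ℝ) : EReal) :=
      hφbt.eventually_lt_const (by exact_mod_cast (by linarith : φs < φs + δ / 2))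
    obtain ⟨j, h1, h2, h3⟩ := (hev1.and (hev2.and hev3)).exists
    have hge : ((F (xb (κ j)) + r : ℝ) : EReal) ≤ f (xb (κ j)) + g (xb (κ j)) := by
      rw [← hfco (xb (κ j)), EReal.coe_add]
      exact add_le_add_right h1.le _
    have hgt2 : ((φs + δ / 2 : ℝ) : EReal) < ((F (xb (κ j)) + r : ℝ) : EReal) := by
      rw [EReal.coe_lt_coe_iff]
      simp only [hδdef] at h2 ⊢
      linarith
    exact lt_irrefl _ ((hgt2.trans_le hge).trans h3)
  -- key inequality : φs ≤ fbObj xs w for every w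
  have henvκ : Tendsto (fun j => fbEnv h h' f f' g γ (x (κ j))) atTop (𝓝 ((φs : ℝ) : EReal)) :=
    henv.comp hκt
  have hkey : ∀ w, ((φs : ℝ) : EReal) ≤ fbObj h h' f f' g γ xs w := by
    intro w
    rcases eq_or_ne (g w) ⊤ with hgw | hgw
    · rw [hfbObj, hgw, EReal.coe_add_top]
      exact le_top
    · have hgwco : g w = (((g w).toReal : ℝ) : EReal) := (EReal.coe_toReal hgw (hg.2 w)).symm
      set Gw : ℝ := (g w).toReal with hGwdef
      have hFt : Tendsto (fun j => F (x (κ j))) atTop (𝓝 (F xs)) := (hFcont.tendsto _).comp hxκ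
      have hip : Tendsto (fun j => (⟪f' (x (κ j)), w - x (κ j)⟫ : ℝ)) atTop
          (𝓝 ⟪f' xs, w - xs⟫) :=
        (continuous_inner.tendsto _).comp (hf't.prodMk_nhds (tendsto_const_nhds.sub hxκ))
      have hDt : Tendsto (fun j => Dr w (x (κ j))) atTop (𝓝 (Dr w xs)) := by
        have h2 : Tendsto (fun j => H (x (κ j))) atTop (𝓝 (H xs)) := (hHcont.tendsto _).comp hxκ
        have h3 : Tendsto (fun j => (⟪h' (x (κ j)), w - x (κ j)⟫ : ℝ)) atTop
            (𝓝 ⟪h' xs, w - xs⟫) :=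
          (continuous_inner.tendsto _).comp (hh't.prodMk_nhds (tendsto_const_nhds.sub hxκ))
        simpa [hDrdef] using (tendsto_const_nhds.sub h2).sub h3
      have hRt : Tendsto
          (fun j => F (x (κ j)) + ⟪f' (x (κ j)), w - x (κ j)⟫ + 1 / γ * Dr w (x (κ j)) + Gw)
          atTop (𝓝 (F xs + ⟪f' xs, w - xs⟫ + 1 / γ * Dr w xs + Gw)) :=
        ((hFt.add hip).add (hDt.const_mul _)).add tendsto_const_nhds
      have hRtE : Tendsto
          (fun j => ((F (x (κ j)) + ⟪f' (x (κ j)), w - x (κ j)⟫ + 1 / γ * Dr w (x (κ j)) + Gw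
            : ℝ) : EReal))
          atTop (𝓝 ((F xs + ⟪f' xs, w - xs⟫ + 1 / γ * Dr w xs + Gw : ℝ) : EReal)) :=
        EReal.tendsto_coe.mpr hRt
      have hle : ∀ j, fbEnv h h' f f' g γ (x (κ j))
          ≤ ((F (x (κ j)) + ⟪f' (x (κ j)), w - x (κ j)⟫ + 1 / γ * Dr w (x (κ j)) + Gw
            : ℝ) : EReal) := by
        intro j
        have hi : fbEnv h h' f f' g γ (x (κ j)) ≤ fbObj h h' f f' g γ (x (κ j)) w :=
          iInf_le _ _
        rwa [hfbObj, hgwco, ← EReal.coe_add] at hi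
      have hfin := le_of_tendsto_of_tendsto' henvκ hRtE hle
      rw [hfbObj, hgwco, ← EReal.coe_add]
      exact hfin
  have hobjxs : fbObj h h' f f' g γ xs xs = f xs + g xs := by
    rw [hfbObj, hDrzero]
    simp only [sub_self, inner_zero_right, add_zero, mul_zero]
    rw [hfco]
  have hφeq : f xs + g xs = ((φs : ℝ) : EReal) := by
    refine le_antisymm hE ?_
    have hk := hkey xs
    rwa [hobjxs] at hk
  refine ⟨hxbκ, ?_, hφeq⟩
  show ∀ w, fbObj h h' f f' g γ xs xs ≤ fbObj h h' f f' g γ xs w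
  intro w
  calc fbObj h h' f f' g γ xs xs = f xs + g xs := hobjxs
    _ ≤ ((φs : ℝ) : EReal) := hE
    _ ≤ fbObj h h' f f' g γ xs w := hkey w
end

section
/- Let R : ℝⁿ → ℝⁿ satisfy R(x⋆) = 0, and suppose R is strictly differentiable at x⋆ with invertible derivative A (i.e., R(y) − R(z) − A(y − z) = o(‖y − z‖) as y, z → x⋆, and A is an invertible linear map). Let (xᵏ) be a sequence with xᵏ → x⋆ and xᵏ ≠ x⋆ for all k, and let (dᵏ) be a sequence of nonzero vectors satisfying the Dennis–Moré condition ‖R(xᵏ) + A dᵏ‖ / ‖dᵏ‖ → 0. Then ‖xᵏ + dᵏ − x⋆‖ / ‖xᵏ − x⋆‖ → 0 as k → ∞, i.e., the directions dᵏ are superlinear with respect to x⋆. -/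
open Filter Topology Set

noncomputable section

-- STATEMENT 19
theorem stmt19_dennis_more_superlinear
    {n : ℕ} (R : Rn n → Rn n) (xs : Rn n) (A : Rn n ≃L[ℝ] Rn n)
    (hR0 : R xs = 0)
    (hstrict : HasStrictFDerivAt R (A : Rn n →L[ℝ] Rn n) xs)
    (x d : ℕ → Rn n)
    (hx : Tendsto x atTop (𝓝 xs)) (hxne : ∀ k, x k ≠ xs) (hdne : ∀ k, d k ≠ 0)
    (hDM : Tendsto (fun k => ‖R (x k) + A (d k)‖ / ‖d k‖) atTop (𝓝 (0 : ℝ))) :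
    Tendsto (fun k => ‖x k + d k - xs‖ / ‖x k - xs‖) atTop (𝓝 (0 : ℝ)) := by
  set C : ℝ := ‖(A.symm : Rn n →L[ℝ] Rn n)‖ with hC
  set CA : ℝ := ‖(A : Rn n →L[ℝ] Rn n)‖ with hCA
  have hCnn : 0 ≤ C := norm_nonneg _
  have hCAnn : 0 ≤ CA := norm_nonneg _
  -- positivity of denominators
  have hr : ∀ k, (0:ℝ) < ‖x k - xs‖ := fun k =>
    norm_pos_iff.mpr (sub_ne_zero.mpr (hxne k))
  have hb : ∀ k, (0:ℝ) < ‖d k‖ := fun k => norm_pos_iff.mpr (hdne k)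
  -- norm bounds through A
  have hAsymm : ∀ v : Rn n, ‖v‖ ≤ C * ‖A v‖ := by
    intro v
    calc ‖v‖ = ‖A.symm (A v)‖ := by rw [A.symm_apply_apply]
      _ ≤ C * ‖A v‖ := (A.symm : Rn n →L[ℝ] Rn n).le_opNorm (A v)
  -- strict differentiability along the sequence
  have hpair : Tendsto (fun k => (x k, xs)) atTop (𝓝 (xs, xs)) := by
    rw [nhds_prod_eq]
    exact hx.prodMk tendsto_const_nhds
  have hcomp : (fun k => R (x k) - A (x k - xs)) =o[atTop] fun k => x k - xs := by
    have h2 := hstrict.isLittleO.comp_tendsto hpair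
    simp only [Function.comp_def] at h2
    simpa only [hR0, sub_zero, ContinuousLinearEquiv.coe_coe] using h2
  have h1 : Tendsto (fun k => ‖R (x k) - A (x k - xs)‖ / ‖x k - xs‖) atTop (𝓝 0) :=
    hcomp.norm_norm.tendsto_div_nhds_zero
  -- notation
  set ε : ℕ → ℝ := fun k => ‖R (x k) + A (d k)‖ / ‖d k‖ with hε
  set ε1 : ℕ → ℝ := fun k => ‖R (x k) - A (x k - xs)‖ / ‖x k - xs‖ with hε1
  have hεnn : ∀ k, 0 ≤ ε k := fun k => div_nonneg (norm_nonneg _) (norm_nonneg _)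
  set M : ℝ := 2 * (C + 1) * (1 + CA) with hM
  -- eventual smallness
  have hev1 : ∀ᶠ k in atTop, ε k ≤ 1 / (2 * (C + 1)) := by
    have : (0:ℝ) < 1 / (2 * (C + 1)) := by positivity
    exact (hDM.eventually (ge_mem_nhds this)).mono fun k hk => hk
  have hev2 : ∀ᶠ k in atTop, ε1 k ≤ 1 := by
    exact (h1.eventually (ge_mem_nhds one_pos)).mono fun k hk => hk
  -- eventual bound on ‖d k‖
  have hdb : ∀ᶠ k in atTop, ‖d k‖ ≤ M * ‖x k - xs‖ := by
    filter_upwards [hev1, hev2] with k h1k h2k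
    have hAd : ‖A (d k)‖ ≤ ‖R (x k) + A (d k)‖ + ‖R (x k) - A (x k - xs)‖ + CA * ‖x k - xs‖ := by
      have : A (d k) = (R (x k) + A (d k)) - (R (x k) - A (x k - xs)) - A (x k - xs) := by
        abel
      have t0 : ‖A (d k)‖ = ‖(R (x k) + A (d k)) - (R (x k) - A (x k - xs)) - A (x k - xs)‖ :=
        congrArg norm this
      have t1 : ‖(R (x k) + A (d k)) - (R (x k) - A (x k - xs)) - A (x k - xs)‖
          ≤ ‖(R (x k) + A (d k)) - (R (x k) - A (x k - xs))‖ + ‖A (x k - xs)‖ :=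
        norm_sub_le _ _
      have t2 : ‖(R (x k) + A (d k)) - (R (x k) - A (x k - xs))‖
          ≤ ‖R (x k) + A (d k)‖ + ‖R (x k) - A (x k - xs)‖ := norm_sub_le _ _
      have t3 : ‖A (x k - xs)‖ ≤ CA * ‖x k - xs‖ := (A : Rn n →L[ℝ] Rn n).le_opNorm _
      linarith [t0, t1, t2, t3]
    have hb1 : ‖d k‖ ≤ C * ‖A (d k)‖ := hAsymm (d k)
    have ha : ‖R (x k) + A (d k)‖ = ε k * ‖d k‖ := by
      simp only [hε]; rw [div_mul_cancel₀ _ (hb k).ne']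
    have he : ‖R (x k) - A (x k - xs)‖ = ε1 k * ‖x k - xs‖ := by
      simp only [hε1]; rw [div_mul_cancel₀ _ (hr k).ne']
    have hεk : ε k * C ≤ 1/2 := by
      have h4 : ε k * C ≤ (1 / (2 * (C + 1))) * C :=
        mul_le_mul_of_nonneg_right h1k hCnn
      have h5 : (1 / (2 * (C + 1))) * C ≤ 1/2 := by
        rw [div_mul_eq_mul_div, div_le_div_iff₀ (by positivity) (by norm_num)]
        nlinarith
      linarith
    nlinarith [hr k, hb k, hεnn k, norm_nonneg (A (d k)), mul_le_mul_of_nonneg_left hAd hCnn,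
      mul_le_mul_of_nonneg_left (hr k).le hCnn]
  -- main bound
  have hmain : ∀ᶠ k in atTop,
      ‖x k + d k - xs‖ / ‖x k - xs‖ ≤ C * (ε k * M + ε1 k) := by
    filter_upwards [hdb] with k hk
    have hAeq : A (x k + d k - xs) = (R (x k) + A (d k)) + (A (x k - xs) - R (x k)) := by
      have : x k + d k - xs = (x k - xs) + d k := by abel
      rw [this, map_add]
      abel
    have hnorm : ‖x k + d k - xs‖ ≤ C * (‖R (x k) + A (d k)‖ + ‖R (x k) - A (x k - xs)‖) := by
      refine (hAsymm _).trans ?_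
      rw [hAeq]
      gcongr
      refine (norm_add_le _ _).trans ?_
      gcongr
      rw [norm_sub_rev]
    have ha : ‖R (x k) + A (d k)‖ = ε k * ‖d k‖ := by
      simp only [hε]; rw [div_mul_cancel₀ _ (hb k).ne']
    have he : ‖R (x k) - A (x k - xs)‖ = ε1 k * ‖x k - xs‖ := by
      simp only [hε1]; rw [div_mul_cancel₀ _ (hr k).ne']
    rw [div_le_iff₀ (hr k)]
    calc ‖x k + d k - xs‖ ≤ C * (ε k * ‖d k‖ + ε1 k * ‖x k - xs‖) := by rw [← ha, ← he]; exact hnorm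
      _ ≤ C * (ε k * (M * ‖x k - xs‖) + ε1 k * ‖x k - xs‖) := by
          gcongr
      _ = C * (ε k * M + ε1 k) * ‖x k - xs‖ := by ring
  -- squeeze
  have hlim : Tendsto (fun k => C * (ε k * M + ε1 k)) atTop (𝓝 0) := by
    have := ((hDM.mul_const M).add h1).const_mul C
    simpa using this
  refine squeeze_zero' ?_ hmain hlim
  exact Eventually.of_forall fun k => div_nonneg (norm_nonneg _) (norm_nonneg _)
end
end
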